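/- arXiv:2603.04693 — 2 statements merged into one kernel-verified Lean document; each statement's English description precedes it below -/
import Mathlib

section
/- Let R be a 2-dimensional rectangle in ℝ² and let 𝒮 be a finite collection of pairwise disjoint 2-dimensional subrectangles of R. Then there exists a minimal locally regulated partition 𝒫 of R with 𝒮 ⊆ 𝒫. -/
/-- An (full-dimensional) rectangle in `ι → ℝ`: a product of nondegenerate closed intervals. -/
def IsRect {ι : Type*} (R : Set (ι → ℝ)) : Prop :=
  ∃ a b : ι → ℝ, (∀ i, a i < b i) ∧ R = Set.Icc a b

/-- `F` is a face of the rectangle `Q` with normal vector `e j`. -/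
def IsFaceWithNormal {ι : Type*} (F Q : Set (ι → ℝ)) (j : ι) : Prop :=
  ∃ a b : ι → ℝ, (∀ i, a i < b i) ∧ Q = Set.Icc a b ∧
    (F = {y ∈ Q | y j = a j} ∨ F = {y ∈ Q | y j = b j})

/-- `F` is a face of the rectangle `Q`. -/
def IsFaceOf {ι : Type*} (F Q : Set (ι → ℝ)) : Prop :=
  ∃ j, IsFaceWithNormal F Q j

/-- `e j` is a boundary vector of `x` with respect to the collection `P`. -/
def IsBoundaryVector {ι : Type*} (P : Set (Set (ι → ℝ))) (x : ι → ℝ) (j : ι) : Prop :=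
  ∃ Q ∈ P, ∃ F, IsFaceWithNormal F Q j ∧ x ∈ F

/-- `ν_P(x)`: the number of members of `P` containing `x`. -/
noncomputable def nuP {ι : Type*} (P : Set (Set (ι → ℝ))) (x : ι → ℝ) : ℕ :=
  Set.ncard {Q | Q ∈ P ∧ x ∈ Q}

/-- `β_P(x)`: the number of boundary vectors of `x` with respect to `P`. -/
noncomputable def betaP {ι : Type*} (P : Set (Set (ι → ℝ))) (x : ι → ℝ) : ℕ :=
  Set.ncard {j | IsBoundaryVector P x j}

/-- A locally regulated cover of `R`. -/
def IsLocRegCover {ι : Type*} (R : Set (ι → ℝ)) (P : Set (Set (ι → ℝ))) : Prop :=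
  P.Finite ∧ (∀ Q ∈ P, IsRect Q) ∧ ⋃₀ P = R

/-- A locally regulated partition of `R`. -/
def IsLocRegPartition {ι : Type*} (R : Set (ι → ℝ)) (P : Set (Set (ι → ℝ))) : Prop :=
  IsLocRegCover R P ∧ ∀ Q₁ ∈ P, ∀ Q₂ ∈ P, Q₁ ≠ Q₂ → interior Q₁ ∩ interior Q₂ = ∅

/-- The collection `P` is about `x` (inside `R`). -/
def IsAbout {ι : Type*} (R : Set (ι → ℝ)) (P : Set (Set (ι → ℝ))) (x : ι → ℝ) : Prop :=
  ∀ Q ∈ P, ∀ F, IsFaceOf F Q → x ∈ F ∨ ∃ G, IsFaceOf G R ∧ F ⊆ G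

/-- A regulated partition of `ι → ℝ`. -/
def IsRegPartition {ι : Type*} (P : Set (Set (ι → ℝ))) : Prop :=
  (∃ (D : Set ℝ) (d : ℝ), 0 < d ∧ (∀ r₁ ∈ D, ∀ r₂ ∈ D, r₁ ≠ r₂ → d < |r₁ - r₂|) ∧
    ∀ Q ∈ P, ∃ a b : ι → ℝ, (∀ i, a i ∈ D ∧ b i ∈ D ∧ a i < b i) ∧ Q = Set.Icc a b) ∧
  (∀ x : ι → ℝ, ∃ Q ∈ P, x ∈ Q) ∧
  (∀ Q₁ ∈ P, ∀ Q₂ ∈ P, Q₁ ≠ Q₂ → interior Q₁ ∩ interior Q₂ = ∅)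

/-- `v` is the boundary incidence sequence of `x` with respect to the rectangle `Q`. -/
def IsBIS {ι : Type*} (Q : Set (ι → ℝ)) (x : ι → ℝ) (v : ι → ℤ) : Prop :=
  ∃ a b : ι → ℝ, (∀ i, a i < b i) ∧ Q = Set.Icc a b ∧ x ∈ Q ∧
    ∀ j, v j = if x j = a j then 1 else if x j = b j then -1 else 0

open Set
open scoped Classical

namespace Stmt10

noncomputable def rlo (Q : Set (Fin 2 → ℝ)) : Fin 2 → ℝ :=
  if h : IsRect Q then h.choose else 0

noncomputable def rhi (Q : Set (Fin 2 → ℝ)) : Fin 2 → ℝ :=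
  if h : IsRect Q then h.choose_spec.choose else 0

lemma rect_spec {Q : Set (Fin 2 → ℝ)} (h : IsRect Q) :
    (∀ i, rlo Q i < rhi Q i) ∧ Q = Set.Icc (rlo Q) (rhi Q) := by
  rw [rlo, rhi]
  simp only [dif_pos h]
  exact ⟨h.choose_spec.choose_spec.1, h.choose_spec.choose_spec.2⟩

lemma mem_box {a b x : Fin 2 → ℝ} :
    x ∈ Icc a b ↔ (a 0 ≤ x 0 ∧ x 0 ≤ b 0) ∧ (a 1 ≤ x 1 ∧ x 1 ≤ b 1) := by
  simp only [Set.mem_Icc, Pi.le_def, Fin.forall_fin_two]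
  tauto

lemma mem_interior_box {a b x : Fin 2 → ℝ} :
    x ∈ interior (Icc a b) ↔ (a 0 < x 0 ∧ x 0 < b 0) ∧ (a 1 < x 1 ∧ x 1 < b 1) := by
  rw [← Set.pi_univ_Icc, interior_pi_set Set.finite_univ]
  simp only [Set.mem_univ_pi, interior_Icc, Set.mem_Ioo, Fin.forall_fin_two]

lemma box_inj {a b c d : Fin 2 → ℝ} (h1 : ∀ i, a i < b i)
    (heq : Icc a b = Icc c d) : a = c ∧ b = d := by
  have hab : a ≤ b := fun i => (h1 i).le
  have ha : a ∈ Icc c d := heq ▸ ⟨le_refl a, hab⟩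
  have hb : b ∈ Icc c d := heq ▸ ⟨hab, le_refl b⟩
  have hcd : c ≤ d := le_trans ha.1 ha.2
  have hc : c ∈ Icc a b := heq ▸ ⟨le_refl c, hcd⟩
  have hd : d ∈ Icc a b := heq ▸ ⟨hcd, le_refl d⟩
  exact ⟨le_antisymm hc.1 ha.1, le_antisymm hb.2 hd.2⟩

lemma exists_avoid {a b : ℝ} (h : a < b) (s : Finset ℝ) :
    ∃ u, a < u ∧ u < b ∧ u ∉ s := by
  obtain ⟨u, hu⟩ := ((Set.Ioo_infinite h).diff s.finite_toSet).nonempty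
  exact ⟨u, hu.1.1, hu.1.2, by simpa using hu.2⟩

variable (𝔖 : Finset (Set (Fin 2 → ℝ))) (A B : Fin 2 → ℝ)

/-- all relevant x-coordinates -/
noncomputable def Ec (𝔖 : Finset (Set (Fin 2 → ℝ))) (A B : Fin 2 → ℝ) : Finset ℝ :=
  insert (A 0) (insert (B 0) ((𝔖.image fun Q => rlo Q 0) ∪ (𝔖.image fun Q => rhi Q 0)))

/-- all relevant y-coordinates -/
noncomputable def Fc (𝔖 : Finset (Set (Fin 2 → ℝ))) (A B : Fin 2 → ℝ) : Finset ℝ :=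
  insert (A 1) (insert (B 1) ((𝔖.image fun Q => rlo Q 1) ∪ (𝔖.image fun Q => rhi Q 1)))

noncomputable def lval (𝔖 : Finset (Set (Fin 2 → ℝ))) (A B : Fin 2 → ℝ) (u : ℝ) : ℝ :=
  ((insert (A 0) ((Ec 𝔖 A B).filter fun e => e < u)).max' (Finset.insert_nonempty _ _))

noncomputable def rval (𝔖 : Finset (Set (Fin 2 → ℝ))) (A B : Fin 2 → ℝ) (u : ℝ) : ℝ :=
  ((insert (B 0) ((Ec 𝔖 A B).filter fun e => u < e)).min' (Finset.insert_nonempty _ _))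

/-- `Q` covers the x-coordinate `u` -/
def cov (Q : Set (Fin 2 → ℝ)) (u : ℝ) : Prop := rlo Q 0 ≤ u ∧ u ≤ rhi Q 0

noncomputable def bval (𝔖 : Finset (Set (Fin 2 → ℝ))) (A B : Fin 2 → ℝ) (u v : ℝ) : ℝ :=
  ((insert (A 1) ((𝔖.filter fun Q => cov Q u ∧ rhi Q 1 < v).image fun Q => rhi Q 1)).max'
    (Finset.insert_nonempty _ _))

noncomputable def tval (𝔖 : Finset (Set (Fin 2 → ℝ))) (A B : Fin 2 → ℝ) (u v : ℝ) : ℝ :=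
  ((insert (B 1) ((𝔖.filter fun Q => cov Q u ∧ v < rlo Q 1).image fun Q => rlo Q 1)).min'
    (Finset.insert_nonempty _ _))

noncomputable def cellOf (𝔖 : Finset (Set (Fin 2 → ℝ))) (A B : Fin 2 → ℝ) (u v : ℝ) :
    Set (Fin 2 → ℝ) :=
  Icc ![lval 𝔖 A B u, bval 𝔖 A B u v] ![rval 𝔖 A B u, tval 𝔖 A B u v]

def Gen (𝔖 : Finset (Set (Fin 2 → ℝ))) (A B : Fin 2 → ℝ) (u v : ℝ) : Prop :=
  (A 0 < u ∧ u < B 0) ∧ (A 1 < v ∧ v < B 1) ∧ u ∉ Ec 𝔖 A B ∧ v ∉ Fc 𝔖 A B ∧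
    ∀ Q ∈ 𝔖, ![u, v] ∉ Q

def Cells (𝔖 : Finset (Set (Fin 2 → ℝ))) (A B : Fin 2 → ℝ) : Set (Set (Fin 2 → ℝ)) :=
  {K | ∃ u v, Gen 𝔖 A B u v ∧ K = cellOf 𝔖 A B u v}

def Part (𝔖 : Finset (Set (Fin 2 → ℝ))) (A B : Fin 2 → ℝ) : Set (Set (Fin 2 → ℝ)) :=
  ↑𝔖 ∪ Cells 𝔖 A B

end Stmt10

namespace Stmt10

section Lemmas

variable {𝔖 : Finset (Set (Fin 2 → ℝ))} {A B : Fin 2 → ℝ}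

lemma mem_Ec_lo {Q : Set (Fin 2 → ℝ)} (hQ : Q ∈ 𝔖) : rlo Q 0 ∈ Ec 𝔖 A B := by
  simp only [Ec, Finset.mem_insert, Finset.mem_union, Finset.mem_image]
  exact Or.inr (Or.inr (Or.inl ⟨Q, hQ, rfl⟩))

lemma mem_Ec_hi {Q : Set (Fin 2 → ℝ)} (hQ : Q ∈ 𝔖) : rhi Q 0 ∈ Ec 𝔖 A B := by
  simp only [Ec, Finset.mem_insert, Finset.mem_union, Finset.mem_image]
  exact Or.inr (Or.inr (Or.inr ⟨Q, hQ, rfl⟩))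

lemma mem_Fc_lo {Q : Set (Fin 2 → ℝ)} (hQ : Q ∈ 𝔖) : rlo Q 1 ∈ Fc 𝔖 A B := by
  simp only [Fc, Finset.mem_insert, Finset.mem_union, Finset.mem_image]
  exact Or.inr (Or.inr (Or.inl ⟨Q, hQ, rfl⟩))

lemma mem_Fc_hi {Q : Set (Fin 2 → ℝ)} (hQ : Q ∈ 𝔖) : rhi Q 1 ∈ Fc 𝔖 A B := by
  simp only [Fc, Finset.mem_insert, Finset.mem_union, Finset.mem_image]
  exact Or.inr (Or.inr (Or.inr ⟨Q, hQ, rfl⟩))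

variable (hAB : ∀ i, A i < B i) (hS : ∀ Q ∈ 𝔖, IsRect Q ∧ Q ⊆ Icc A B)

section WithhS
include hS

lemma s_nondeg {Q : Set (Fin 2 → ℝ)} (hQ : Q ∈ 𝔖) : ∀ i, rlo Q i < rhi Q i :=
  (rect_spec (hS Q hQ).1).1

lemma s_eq {Q : Set (Fin 2 → ℝ)} (hQ : Q ∈ 𝔖) : Q = Icc (rlo Q) (rhi Q) :=
  (rect_spec (hS Q hQ).1).2

lemma s_bounds {Q : Set (Fin 2 → ℝ)} (hQ : Q ∈ 𝔖) :
    ∀ i, A i ≤ rlo Q i ∧ rhi Q i ≤ B i := by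
  have h1 := s_nondeg hS hQ
  have h2 := s_eq hS hQ
  have hlo : rlo Q ∈ Icc (rlo Q) (rhi Q) := ⟨le_refl _, fun i => (h1 i).le⟩
  have hhi : rhi Q ∈ Icc (rlo Q) (rhi Q) := ⟨fun i => (h1 i).le, le_refl _⟩
  rw [← h2] at hlo hhi
  have hlo' := (hS Q hQ).2 hlo
  have hhi' := (hS Q hQ).2 hhi
  exact fun i => ⟨hlo'.1 i, hhi'.2 i⟩

lemma Ec_bounds (hAB : ∀ i, A i < B i) {e : ℝ} (he : e ∈ Ec 𝔖 A B) :
    A 0 ≤ e ∧ e ≤ B 0 := by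
  simp only [Ec, Finset.mem_insert, Finset.mem_union, Finset.mem_image] at he
  rcases he with rfl | rfl | ⟨Q, hQ, rfl⟩ | ⟨Q, hQ, rfl⟩
  · exact ⟨le_refl _, (hAB 0).le⟩
  · exact ⟨(hAB 0).le, le_refl _⟩
  · exact ⟨(s_bounds hS hQ 0).1, le_trans (s_nondeg hS hQ 0).le (s_bounds hS hQ 0).2⟩
  · exact ⟨le_trans (s_bounds hS hQ 0).1 (s_nondeg hS hQ 0).le, (s_bounds hS hQ 0).2⟩

lemma Fc_bounds (hAB : ∀ i, A i < B i) {e : ℝ} (he : e ∈ Fc 𝔖 A B) :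
    A 1 ≤ e ∧ e ≤ B 1 := by
  simp only [Fc, Finset.mem_insert, Finset.mem_union, Finset.mem_image] at he
  rcases he with rfl | rfl | ⟨Q, hQ, rfl⟩ | ⟨Q, hQ, rfl⟩
  · exact ⟨le_refl _, (hAB 1).le⟩
  · exact ⟨(hAB 1).le, le_refl _⟩
  · exact ⟨(s_bounds hS hQ 1).1, le_trans (s_nondeg hS hQ 1).le (s_bounds hS hQ 1).2⟩
  · exact ⟨le_trans (s_bounds hS hQ 1).1 (s_nondeg hS hQ 1).le, (s_bounds hS hQ 1).2⟩

end WithhS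

lemma lval_ge {u : ℝ} : A 0 ≤ lval 𝔖 A B u :=
  Finset.le_max' _ _ (Finset.mem_insert_self _ _)

lemma lval_lt {u : ℝ} (h : A 0 < u) : lval 𝔖 A B u < u := by
  apply Finset.max'_lt_iff _ _ |>.2
  intro e he
  rcases Finset.mem_insert.1 he with rfl | he
  · exact h
  · exact (Finset.mem_filter.1 he).2

lemma rval_le {u : ℝ} : rval 𝔖 A B u ≤ B 0 :=
  Finset.min'_le _ _ (Finset.mem_insert_self _ _)

lemma lt_rval {u : ℝ} (h : u < B 0) : u < rval 𝔖 A B u := by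
  apply Finset.lt_min'_iff _ _ |>.2
  intro e he
  rcases Finset.mem_insert.1 he with rfl | he
  · exact h
  · exact (Finset.mem_filter.1 he).2

lemma lval_mem {u : ℝ} : lval 𝔖 A B u ∈ Ec 𝔖 A B := by
  rcases Finset.mem_insert.1 (Finset.max'_mem (insert (A 0) ((Ec 𝔖 A B).filter fun e => e < u))
    (Finset.insert_nonempty _ _)) with h | h
  · rw [lval, h]; simp [Ec]
  · exact (Finset.mem_filter.1 (by rw [lval] at *; exact h)).1

lemma rval_mem {u : ℝ} : rval 𝔖 A B u ∈ Ec 𝔖 A B := by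
  rcases Finset.mem_insert.1 (Finset.min'_mem (insert (B 0) ((Ec 𝔖 A B).filter fun e => u < e))
    (Finset.insert_nonempty _ _)) with h | h
  · rw [rval, h]; simp [Ec]
  · exact (Finset.mem_filter.1 (by rw [rval] at *; exact h)).1

lemma le_lval {u e : ℝ} (he : e ∈ Ec 𝔖 A B) (h : e < u) : e ≤ lval 𝔖 A B u := by
  rw [lval]
  apply Finset.le_max'
  exact Finset.mem_insert_of_mem (Finset.mem_filter.2 ⟨he, h⟩)

lemma rval_le' {u e : ℝ} (he : e ∈ Ec 𝔖 A B) (h : u < e) : rval 𝔖 A B u ≤ e := by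
  rw [rval]
  apply Finset.min'_le
  exact Finset.mem_insert_of_mem (Finset.mem_filter.2 ⟨he, h⟩)

lemma bval_ge {u v : ℝ} : A 1 ≤ bval 𝔖 A B u v :=
  Finset.le_max' _ _ (Finset.mem_insert_self _ _)

lemma bval_lt {u v : ℝ} (h : A 1 < v) : bval 𝔖 A B u v < v := by
  apply Finset.max'_lt_iff _ _ |>.2
  intro e he
  rcases Finset.mem_insert.1 he with rfl | he
  · exact h
  · obtain ⟨Q, hQ, rfl⟩ := Finset.mem_image.1 he
    exact (Finset.mem_filter.1 hQ).2.2

lemma tval_le {u v : ℝ} : tval 𝔖 A B u v ≤ B 1 :=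
  Finset.min'_le _ _ (Finset.mem_insert_self _ _)

lemma lt_tval {u v : ℝ} (h : v < B 1) : v < tval 𝔖 A B u v := by
  apply Finset.lt_min'_iff _ _ |>.2
  intro e he
  rcases Finset.mem_insert.1 he with rfl | he
  · exact h
  · obtain ⟨Q, hQ, rfl⟩ := Finset.mem_image.1 he
    exact (Finset.mem_filter.1 hQ).2.2

lemma le_bval {u v : ℝ} {Q : Set (Fin 2 → ℝ)} (hQ : Q ∈ 𝔖) (hc : cov Q u) (hv : rhi Q 1 < v) :
    rhi Q 1 ≤ bval 𝔖 A B u v := by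
  rw [bval]
  apply Finset.le_max'
  exact Finset.mem_insert_of_mem
    (Finset.mem_image.2 ⟨Q, Finset.mem_filter.2 ⟨hQ, hc, hv⟩, rfl⟩)

lemma tval_le' {u v : ℝ} {Q : Set (Fin 2 → ℝ)} (hQ : Q ∈ 𝔖) (hc : cov Q u) (hv : v < rlo Q 1) :
    tval 𝔖 A B u v ≤ rlo Q 1 := by
  rw [tval]
  apply Finset.min'_le
  exact Finset.mem_insert_of_mem
    (Finset.mem_image.2 ⟨Q, Finset.mem_filter.2 ⟨hQ, hc, hv⟩, rfl⟩)

lemma bval_cases (u v : ℝ) : bval 𝔖 A B u v = A 1 ∨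
    ∃ Q ∈ 𝔖, cov Q u ∧ rhi Q 1 < v ∧ rhi Q 1 = bval 𝔖 A B u v := by
  rcases Finset.mem_insert.1 (Finset.max'_mem
    (insert (A 1) ((𝔖.filter fun Q => cov Q u ∧ rhi Q 1 < v).image fun Q => rhi Q 1))
    (Finset.insert_nonempty _ _)) with h | h
  · left; rw [bval]; exact h
  · right
    obtain ⟨Q, hQ, hQ2⟩ := Finset.mem_image.1 h
    obtain ⟨h1, h2, h3⟩ := Finset.mem_filter.1 hQ
    exact ⟨Q, h1, h2, h3, hQ2⟩

lemma tval_cases (u v : ℝ) : tval 𝔖 A B u v = B 1 ∨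
    ∃ Q ∈ 𝔖, cov Q u ∧ v < rlo Q 1 ∧ rlo Q 1 = tval 𝔖 A B u v := by
  rcases Finset.mem_insert.1 (Finset.min'_mem
    (insert (B 1) ((𝔖.filter fun Q => cov Q u ∧ v < rlo Q 1).image fun Q => rlo Q 1))
    (Finset.insert_nonempty _ _)) with h | h
  · left; rw [tval]; exact h
  · right
    obtain ⟨Q, hQ, hQ2⟩ := Finset.mem_image.1 h
    obtain ⟨h1, h2, h3⟩ := Finset.mem_filter.1 hQ
    exact ⟨Q, h1, h2, h3, hQ2⟩

lemma bval_mem_Fc {u v : ℝ} : bval 𝔖 A B u v ∈ Fc 𝔖 A B := by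
  rcases bval_cases (𝔖 := 𝔖) (A := A) (B := B) u v with h | ⟨Q, hQ, _, _, h⟩
  · rw [h]; simp [Fc]
  · rw [← h]; exact mem_Fc_hi hQ

lemma tval_mem_Fc {u v : ℝ} : tval 𝔖 A B u v ∈ Fc 𝔖 A B := by
  rcases tval_cases (𝔖 := 𝔖) (A := A) (B := B) u v with h | ⟨Q, hQ, _, _, h⟩
  · rw [h]; simp [Fc]
  · rw [← h]; exact mem_Fc_lo hQ

/-- No x-coordinate in `Ec` lies strictly inside the slab around `u`. -/
lemma notE_Ioo {u e : ℝ} (hu : u ∉ Ec 𝔖 A B) (he : e ∈ Ec 𝔖 A B) :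
    e ≤ lval 𝔖 A B u ∨ rval 𝔖 A B u ≤ e := by
  rcases lt_trichotomy e u with h | rfl | h
  · exact Or.inl (le_lval he h)
  · exact absurd he hu
  · exact Or.inr (rval_le' he h)

/-- rectangles of the family cover either all or none of the open slab -/
lemma cov_transfer (hS : ∀ Q ∈ 𝔖, IsRect Q ∧ Q ⊆ Icc A B) {u u₁ u₂ : ℝ}
    (hu : u ∉ Ec 𝔖 A B)
    (h₁ : lval 𝔖 A B u < u₁ ∧ u₁ < rval 𝔖 A B u)
    (h₂ : lval 𝔖 A B u < u₂ ∧ u₂ < rval 𝔖 A B u)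
    {Q : Set (Fin 2 → ℝ)} (hQ : Q ∈ 𝔖) (hc : cov Q u₁) : cov Q u₂ := by
  constructor
  · rcases notE_Ioo (A := A) (B := B) hu (mem_Ec_lo hQ) with h | h
    · exact le_trans h h₂.1.le
    · exact absurd (lt_of_le_of_lt (le_trans h hc.1) h₁.2) (lt_irrefl _)
  · rcases notE_Ioo (A := A) (B := B) hu (mem_Ec_hi hQ) with h | h
    · exact absurd (lt_of_le_of_lt (le_trans hc.2 h) h₁.1) (lt_irrefl _)
    · exact le_trans h₂.2.le h

end Lemmas

end Stmt10

namespace Stmt10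

section Core

variable {𝔖 : Finset (Set (Fin 2 → ℝ))} {A B : Fin 2 → ℝ}

lemma vec_eta (z : Fin 2 → ℝ) : ![z 0, z 1] = z := by
  funext i; fin_cases i <;> simp

lemma lval_cases (u : ℝ) : lval 𝔖 A B u = A 0 ∨
    (lval 𝔖 A B u ∈ Ec 𝔖 A B ∧ lval 𝔖 A B u < u) := by
  rcases Finset.mem_insert.1 (Finset.max'_mem (insert (A 0) ((Ec 𝔖 A B).filter fun e => e < u))
    (Finset.insert_nonempty _ _)) with h | h
  · left; rw [lval]; exact h
  · right
    have h' := Finset.mem_filter.1 h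
    exact ⟨h'.1, h'.2⟩

lemma rval_cases (u : ℝ) : rval 𝔖 A B u = B 0 ∨
    (rval 𝔖 A B u ∈ Ec 𝔖 A B ∧ u < rval 𝔖 A B u) := by
  rcases Finset.mem_insert.1 (Finset.min'_mem (insert (B 0) ((Ec 𝔖 A B).filter fun e => u < e))
    (Finset.insert_nonempty _ _)) with h | h
  · left; rw [rval]; exact h
  · right
    have h' := Finset.mem_filter.1 h
    exact ⟨h'.1, h'.2⟩

lemma lval_eq {u u' : ℝ} (hu : u ∉ Ec 𝔖 A B)
    (h1 : lval 𝔖 A B u < u') (h2 : u' < rval 𝔖 A B u) :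
    lval 𝔖 A B u' = lval 𝔖 A B u := by
  apply le_antisymm
  · rw [lval]
    apply Finset.max'_le
    intro e he
    rcases Finset.mem_insert.1 he with rfl | he
    · exact lval_ge
    · have h' := Finset.mem_filter.1 he
      rcases notE_Ioo hu h'.1 with h | h
      · exact h
      · linarith [h'.2]
  · rcases lval_cases (𝔖 := 𝔖) (A := A) (B := B) u with h | ⟨h, _⟩
    · rw [h]; exact lval_ge
    · exact le_lval h h1

lemma rval_eq {u u' : ℝ} (hu : u ∉ Ec 𝔖 A B)
    (h1 : lval 𝔖 A B u < u') (h2 : u' < rval 𝔖 A B u) :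
    rval 𝔖 A B u' = rval 𝔖 A B u := by
  apply le_antisymm
  · rcases rval_cases (𝔖 := 𝔖) (A := A) (B := B) u with h | ⟨h, _⟩
    · rw [h]; exact rval_le
    · exact rval_le' h h2
  · rw [rval]
    apply Finset.le_min'
    intro e he
    rcases Finset.mem_insert.1 he with rfl | he
    · exact rval_le
    · have h' := Finset.mem_filter.1 he
      rcases notE_Ioo hu h'.1 with h | h
      · linarith [h'.2]
      · exact h

lemma gen_notmem (hS : ∀ Q ∈ 𝔖, IsRect Q ∧ Q ⊆ Icc A B) {u v : ℝ}
    (hG : Gen 𝔖 A B u v) {Q : Set (Fin 2 → ℝ)} (hQ : Q ∈ 𝔖)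
    (hc : cov Q u) (h1 : rlo Q 1 ≤ v) (h2 : v ≤ rhi Q 1) : False := by
  apply hG.2.2.2.2 Q hQ
  rw [s_eq hS hQ, mem_box]
  simp only [Matrix.cons_val_zero, Matrix.cons_val_one, Matrix.head_cons]
  exact ⟨⟨hc.1, hc.2⟩, h1, h2⟩

lemma bval_eq (hS : ∀ Q ∈ 𝔖, IsRect Q ∧ Q ⊆ Icc A B) {u v u' v' : ℝ}
    (hG : Gen 𝔖 A B u v)
    (h1 : lval 𝔖 A B u < u') (h2 : u' < rval 𝔖 A B u)
    (h3 : bval 𝔖 A B u v < v') (h4 : v' < tval 𝔖 A B u v) :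
    bval 𝔖 A B u' v' = bval 𝔖 A B u v := by
  have hu : u ∉ Ec 𝔖 A B := hG.2.2.1
  have huI : lval 𝔖 A B u < u ∧ u < rval 𝔖 A B u :=
    ⟨lval_lt hG.1.1, lt_rval hG.1.2⟩
  apply le_antisymm
  · rw [bval]
    apply Finset.max'_le
    intro e he
    rcases Finset.mem_insert.1 he with rfl | he
    · exact bval_ge (B := B)
    · obtain ⟨Q, hQf, rfl⟩ := Finset.mem_image.1 he
      obtain ⟨hQ, hcov', hlt'⟩ := Finset.mem_filter.1 hQf
      have hcov : cov Q u := cov_transfer hS hu ⟨h1, h2⟩ huI hQ hcov'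
      rcases lt_or_ge (rhi Q 1) v with h | h
      · exact le_bval hQ hcov h
      · rcases lt_or_ge v (rlo Q 1) with h' | h'
        · have := tval_le' (A := A) (B := B) hQ hcov h'
          have := s_nondeg hS hQ 1
          linarith
        · exact absurd (gen_notmem hS hG hQ hcov h' h) (fun f => f)
  · rcases bval_cases (𝔖 := 𝔖) (A := A) (B := B) u v with h | ⟨Q, hQ, hcov, hlt, heq⟩
    · rw [h]; exact bval_ge
    · rw [← heq]
      exact le_bval hQ (cov_transfer hS hu huI ⟨h1, h2⟩ hQ hcov) (by linarith)

lemma tval_eq (hS : ∀ Q ∈ 𝔖, IsRect Q ∧ Q ⊆ Icc A B) {u v u' v' : ℝ}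
    (hG : Gen 𝔖 A B u v)
    (h1 : lval 𝔖 A B u < u') (h2 : u' < rval 𝔖 A B u)
    (h3 : bval 𝔖 A B u v < v') (h4 : v' < tval 𝔖 A B u v) :
    tval 𝔖 A B u' v' = tval 𝔖 A B u v := by
  have hu : u ∉ Ec 𝔖 A B := hG.2.2.1
  have huI : lval 𝔖 A B u < u ∧ u < rval 𝔖 A B u :=
    ⟨lval_lt hG.1.1, lt_rval hG.1.2⟩
  apply le_antisymm
  · rcases tval_cases (𝔖 := 𝔖) (A := A) (B := B) u v with h | ⟨Q, hQ, hcov, hlt, heq⟩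
    · rw [h]; exact tval_le
    · rw [← heq]
      exact tval_le' hQ (cov_transfer hS hu huI ⟨h1, h2⟩ hQ hcov) (by linarith)
  · rw [tval]
    apply Finset.le_min'
    intro e he
    rcases Finset.mem_insert.1 he with rfl | he
    · exact tval_le (A := A)
    · obtain ⟨Q, hQf, rfl⟩ := Finset.mem_image.1 he
      obtain ⟨hQ, hcov', hlt'⟩ := Finset.mem_filter.1 hQf
      have hcov : cov Q u := cov_transfer hS hu ⟨h1, h2⟩ huI hQ hcov'
      rcases lt_or_ge v (rlo Q 1) with h | h
      · exact tval_le' (A := A) hQ hcov h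
      · rcases lt_or_ge (rhi Q 1) v with h' | h'
        · have := le_bval (A := A) (B := B) hQ hcov h'
          have := s_nondeg hS hQ 1
          linarith
        · exact absurd (gen_notmem hS hG hQ hcov h h') (fun f => f)

lemma cell_mem_iff {u v : ℝ} {z : Fin 2 → ℝ} :
    z ∈ cellOf 𝔖 A B u v ↔
      (lval 𝔖 A B u ≤ z 0 ∧ z 0 ≤ rval 𝔖 A B u) ∧
      (bval 𝔖 A B u v ≤ z 1 ∧ z 1 ≤ tval 𝔖 A B u v) := by
  rw [cellOf, mem_box]
  simp

lemma cell_interior_iff {u v : ℝ} {z : Fin 2 → ℝ} :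
    z ∈ interior (cellOf 𝔖 A B u v) ↔
      (lval 𝔖 A B u < z 0 ∧ z 0 < rval 𝔖 A B u) ∧
      (bval 𝔖 A B u v < z 1 ∧ z 1 < tval 𝔖 A B u v) := by
  rw [cellOf, mem_interior_box]
  simp

lemma cell_mem_self {u v : ℝ} (hG : Gen 𝔖 A B u v) : ![u, v] ∈ cellOf 𝔖 A B u v := by
  rw [cell_mem_iff]
  simp only [Matrix.cons_val_zero, Matrix.cons_val_one, Matrix.head_cons]
  exact ⟨⟨(lval_lt hG.1.1).le, (lt_rval hG.1.2).le⟩,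
    ⟨(bval_lt hG.2.1.1).le, (lt_tval hG.2.1.2).le⟩⟩

lemma cell_interior_self {u v : ℝ} (hG : Gen 𝔖 A B u v) :
    ![u, v] ∈ interior (cellOf 𝔖 A B u v) := by
  rw [cell_interior_iff]
  simp only [Matrix.cons_val_zero, Matrix.cons_val_one, Matrix.head_cons]
  exact ⟨⟨lval_lt hG.1.1, lt_rval hG.1.2⟩, ⟨bval_lt hG.2.1.1, lt_tval hG.2.1.2⟩⟩

/-- interiors of cells are free: they meet no rectangle of the family -/
lemma cell_free (hS : ∀ Q ∈ 𝔖, IsRect Q ∧ Q ⊆ Icc A B) {u v : ℝ}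
    (hG : Gen 𝔖 A B u v) {z : Fin 2 → ℝ} (hz : z ∈ interior (cellOf 𝔖 A B u v))
    {Q : Set (Fin 2 → ℝ)} (hQ : Q ∈ 𝔖) : z ∉ Q := by
  intro hzQ
  rw [cell_interior_iff] at hz
  rw [s_eq hS hQ, mem_box] at hzQ
  have huI : lval 𝔖 A B u < u ∧ u < rval 𝔖 A B u :=
    ⟨lval_lt hG.1.1, lt_rval hG.1.2⟩
  have hcov : cov Q u := cov_transfer hS hG.2.2.1 ⟨hz.1.1, hz.1.2⟩ huI hQ ⟨hzQ.1.1, hzQ.1.2⟩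
  rcases lt_or_ge (rhi Q 1) v with h | h
  · have := le_bval (A := A) (B := B) hQ hcov h
    linarith [hz.2.1, hzQ.2.2]
  · rcases lt_or_ge v (rlo Q 1) with h' | h'
    · have := tval_le' (A := A) (B := B) hQ hcov h'
      linarith [hz.2.2, hzQ.2.1]
    · exact gen_notmem hS hG hQ hcov h' h

/-- key consistency: the cell construction is constant on cell interiors -/
lemma cell_consistent (hS : ∀ Q ∈ 𝔖, IsRect Q ∧ Q ⊆ Icc A B) {u v : ℝ}
    (hG : Gen 𝔖 A B u v) {u' v' : ℝ}
    (hmem : ![u', v'] ∈ interior (cellOf 𝔖 A B u v)) :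
    cellOf 𝔖 A B u' v' = cellOf 𝔖 A B u v := by
  rw [cell_interior_iff] at hmem
  simp only [Matrix.cons_val_zero, Matrix.cons_val_one, Matrix.head_cons] at hmem
  obtain ⟨⟨h1, h2⟩, h3, h4⟩ := hmem
  have hu : u ∉ Ec 𝔖 A B := hG.2.2.1
  rw [cellOf, cellOf, lval_eq hu h1 h2, rval_eq hu h1 h2,
    bval_eq hS hG h1 h2 h3 h4, tval_eq hS hG h1 h2 h3 h4]

lemma cell_subset (hS : ∀ Q ∈ 𝔖, IsRect Q ∧ Q ⊆ Icc A B) {u v : ℝ} :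
    cellOf 𝔖 A B u v ⊆ Icc A B := by
  intro z hz
  rw [cell_mem_iff] at hz
  rw [mem_box]
  exact ⟨⟨le_trans lval_ge hz.1.1, le_trans hz.1.2 rval_le⟩,
    ⟨le_trans bval_ge hz.2.1, le_trans hz.2.2 tval_le⟩⟩

lemma cell_isRect {u v : ℝ} (hG : Gen 𝔖 A B u v) : IsRect (cellOf 𝔖 A B u v) := by
  refine ⟨_, _, ?_, rfl⟩
  intro i
  fin_cases i
  · simp only [Matrix.cons_val_zero]
    exact lt_trans (lval_lt hG.1.1) (lt_rval hG.1.2)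
  · simp only [Matrix.cons_val_one, Matrix.head_cons]
    exact lt_trans (bval_lt (B := B) hG.2.1.1) (lt_tval (A := A) hG.2.1.2)

lemma cells_finite : (Cells 𝔖 A B).Finite := by
  apply Set.Finite.subset (Set.Finite.image
    (f := fun q : (ℝ × ℝ) × ℝ × ℝ => Icc ![q.1.1, q.2.1] ![q.1.2, q.2.2])
    (((Ec 𝔖 A B ×ˢ Ec 𝔖 A B) ×ˢ (Fc 𝔖 A B ×ˢ Fc 𝔖 A B)).finite_toSet))
  rintro K ⟨u, v, hG, rfl⟩
  refine ⟨((lval 𝔖 A B u, rval 𝔖 A B u), (bval 𝔖 A B u v, tval 𝔖 A B u v)), ?_, rfl⟩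
  simp only [Finset.coe_product, Set.mem_prod]
  exact ⟨⟨lval_mem, rval_mem⟩, bval_mem_Fc, tval_mem_Fc⟩

lemma part_finite : (Part 𝔖 A B).Finite :=
  Set.Finite.union (𝔖.finite_toSet) cells_finite

lemma part_rect (hS : ∀ Q ∈ 𝔖, IsRect Q ∧ Q ⊆ Icc A B) :
    ∀ K ∈ Part 𝔖 A B, IsRect K := by
  rintro K (hK | ⟨u, v, hG, rfl⟩)
  · exact (hS K hK).1
  · exact cell_isRect hG

lemma part_sub (hS : ∀ Q ∈ 𝔖, IsRect Q ∧ Q ⊆ Icc A B) :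
    ∀ K ∈ Part 𝔖 A B, K ⊆ Icc A B := by
  rintro K (hK | ⟨u, v, hG, rfl⟩)
  · exact (hS K hK).2
  · exact cell_subset hS

lemma part_closed (hS : ∀ Q ∈ 𝔖, IsRect Q ∧ Q ⊆ Icc A B) :
    ∀ K ∈ Part 𝔖 A B, IsClosed K := by
  intro K hK
  obtain ⟨a, b, -, rfl⟩ := part_rect hS K hK
  exact isClosed_Icc

lemma part_union (hAB : ∀ i, A i < B i) (hS : ∀ Q ∈ 𝔖, IsRect Q ∧ Q ⊆ Icc A B) :
    ⋃₀ Part 𝔖 A B = Icc A B := by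
  apply Set.Subset.antisymm
  · intro z hz
    obtain ⟨K, hK, hzK⟩ := hz
    exact part_sub hS K hK hzK
  · intro x hx
    by_contra hxn
    have hU : IsClosed (⋃₀ Part 𝔖 A B) := by
      rw [Set.sUnion_eq_biUnion]
      exact (part_finite).isClosed_biUnion (part_closed hS)
    have hopen : IsOpen (⋃₀ Part 𝔖 A B)ᶜ := hU.isOpen_compl
    obtain ⟨ε, hε, hball⟩ := Metric.isOpen_iff.1 hopen x hxn
    rw [mem_box] at hx
    have h0 : max (A 0) (x 0 - ε) < min (B 0) (x 0 + ε) := by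
      simp only [lt_min_iff, max_lt_iff]
      refine ⟨⟨hAB 0, by linarith [hx.1.1]⟩, by linarith [hx.1.2], by linarith⟩
    have h1 : max (A 1) (x 1 - ε) < min (B 1) (x 1 + ε) := by
      simp only [lt_min_iff, max_lt_iff]
      refine ⟨⟨hAB 1, by linarith [hx.2.1]⟩, by linarith [hx.2.2], by linarith⟩
    obtain ⟨u, hu1, hu2, hu3⟩ := exists_avoid h0 (Ec 𝔖 A B)
    obtain ⟨v, hv1, hv2, hv3⟩ := exists_avoid h1 (Fc 𝔖 A B)
    simp only [max_lt_iff, lt_min_iff] at hu1 hu2 hv1 hv2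
    have hball' : ![u, v] ∈ Metric.ball x ε := by
      rw [Metric.mem_ball, dist_pi_lt_iff hε, Fin.forall_fin_two]
      simp only [Matrix.cons_val_zero, Matrix.cons_val_one, Matrix.head_cons,
        Real.dist_eq, abs_lt]
      exact ⟨⟨by linarith [hu1.2, hu2.2], by linarith [hu1.2, hu2.2]⟩,
        ⟨by linarith [hv1.2, hv2.2], by linarith [hv1.2, hv2.2]⟩⟩
    have hGen : Gen 𝔖 A B u v := by
      refine ⟨⟨hu1.1, hu2.1⟩, ⟨hv1.1, hv2.1⟩, hu3, hv3, ?_⟩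
      intro Q hQ hmem
      have : ![u, v] ∈ ⋃₀ Part 𝔖 A B := ⟨Q, Or.inl hQ, hmem⟩
      exact hball hball' this
    have : ![u, v] ∈ ⋃₀ Part 𝔖 A B :=
      ⟨cellOf 𝔖 A B u v, Or.inr ⟨u, v, hGen, rfl⟩, cell_mem_self hGen⟩
    exact hball hball' this

lemma part_disjoint (hS : ∀ Q ∈ 𝔖, IsRect Q ∧ Q ⊆ Icc A B)
    (hd : ∀ Q₁ ∈ 𝔖, ∀ Q₂ ∈ 𝔖, Q₁ ≠ Q₂ → Q₁ ∩ Q₂ = ∅) :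
    ∀ K₁ ∈ Part 𝔖 A B, ∀ K₂ ∈ Part 𝔖 A B, K₁ ≠ K₂ →
      interior K₁ ∩ interior K₂ = ∅ := by
  have key : ∀ K₁ ∈ Part 𝔖 A B, ∀ K₂ ∈ Part 𝔖 A B, K₁ ≠ K₂ →
      ∀ z, z ∈ interior K₁ → z ∈ interior K₂ → False := by
    rintro K₁ hK₁ K₂ hK₂ hne z hz₁ hz₂
    rcases hK₁ with h₁ | ⟨u₁, v₁, hG₁, rfl⟩
    · rcases hK₂ with h₂ | ⟨u₂, v₂, hG₂, rfl⟩
      · have := hd K₁ h₁ K₂ h₂ hne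
        have : z ∈ K₁ ∩ K₂ := ⟨interior_subset hz₁, interior_subset hz₂⟩
        rw [hd K₁ h₁ K₂ h₂ hne] at this
        exact this
      · exact cell_free hS hG₂ hz₂ h₁ (interior_subset hz₁)
    · rcases hK₂ with h₂ | ⟨u₂, v₂, hG₂, rfl⟩
      · exact cell_free hS hG₁ hz₁ h₂ (interior_subset hz₂)
      · apply hne
        have e₁ : cellOf 𝔖 A B (z 0) (z 1) = cellOf 𝔖 A B u₁ v₁ :=
          cell_consistent hS hG₁ (by rw [vec_eta]; exact hz₁)
        have e₂ : cellOf 𝔖 A B (z 0) (z 1) = cellOf 𝔖 A B u₂ v₂ :=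
          cell_consistent hS hG₂ (by rw [vec_eta]; exact hz₂)
        rw [← e₁, ← e₂]
  intro K₁ hK₁ K₂ hK₂ hne
  rw [Set.eq_empty_iff_forall_notMem]
  rintro z ⟨hz₁, hz₂⟩
  exact key K₁ hK₁ K₂ hK₂ hne z hz₁ hz₂

end Core

end Stmt10

namespace Stmt10

section Geo

variable {𝔖 : Finset (Set (Fin 2 → ℝ))} {A B : Fin 2 → ℝ}

lemma cell_nondeg {u v : ℝ} (hG : Gen 𝔖 A B u v) :
    ∀ i, ![lval 𝔖 A B u, bval 𝔖 A B u v] i < ![rval 𝔖 A B u, tval 𝔖 A B u v] i := by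
  intro i
  fin_cases i
  · simp only [Matrix.cons_val_zero]
    exact lt_trans (lval_lt hG.1.1) (lt_rval hG.1.2)
  · simp only [Matrix.cons_val_one, Matrix.head_cons]
    exact lt_trans (bval_lt (B := B) hG.2.1.1) (lt_tval (A := A) hG.2.1.2)

lemma cell_corners {u v : ℝ} (hG : Gen 𝔖 A B u v) :
    rlo (cellOf 𝔖 A B u v) = ![lval 𝔖 A B u, bval 𝔖 A B u v] ∧
    rhi (cellOf 𝔖 A B u v) = ![rval 𝔖 A B u, tval 𝔖 A B u v] := by
  have hcell := rect_spec (cell_isRect hG)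
  have heq : Icc ![lval 𝔖 A B u, bval 𝔖 A B u v] ![rval 𝔖 A B u, tval 𝔖 A B u v] =
      Icc (rlo (cellOf 𝔖 A B u v)) (rhi (cellOf 𝔖 A B u v)) := hcell.2
  have h := box_inj (cell_nondeg hG) heq
  exact ⟨h.1.symm, h.2.symm⟩

/-- Witness extraction: if `x` lies on the bottom edge of a cell with room to the east,
then some rectangle of the family contains `x`, has top edge at level `x 1`,
and extends strictly east of `x`. -/
lemma witness_BE (hS : ∀ Q ∈ 𝔖, IsRect Q ∧ Q ⊆ Icc A B) {u v : ℝ}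
    (hG : Gen 𝔖 A B u v) {x : Fin 2 → ℝ}
    (hx0l : lval 𝔖 A B u ≤ x 0) (hx0r : x 0 < rval 𝔖 A B u)
    (hx1 : x 1 = bval 𝔖 A B u v) (hbot : A 1 < bval 𝔖 A B u v) :
    ∃ W ∈ 𝔖, x ∈ W ∧ rhi W 1 = x 1 ∧ x 0 < rhi W 0 := by
  classical
  set bad := 𝔖.filter (fun W => x 0 < rlo W 0) with hbad
  set m := (insert (rval 𝔖 A B u) (bad.image fun W => rlo W 0)).min'
    (Finset.insert_nonempty _ _) with hm
  have hxm : x 0 < m := by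
    rw [hm]
    apply Finset.lt_min'_iff _ _ |>.2
    intro e he
    rcases Finset.mem_insert.1 he with rfl | he
    · exact hx0r
    · obtain ⟨W, hW, rfl⟩ := Finset.mem_image.1 he
      exact (Finset.mem_filter.1 hW).2
  have hmr : m ≤ rval 𝔖 A B u := Finset.min'_le _ _ (Finset.mem_insert_self _ _)
  set u' := (x 0 + m) / 2 with hu'
  have hu1 : x 0 < u' := by rw [hu']; linarith
  have hu2 : u' < m := by rw [hu']; linarith
  have h1 : lval 𝔖 A B u < u' := lt_of_le_of_lt hx0l hu1
  have h2 : u' < rval 𝔖 A B u := lt_of_lt_of_le hu2 hmr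
  have h3 : bval 𝔖 A B u v < v := bval_lt hG.2.1.1
  have h4 : v < tval 𝔖 A B u v := lt_tval hG.2.1.2
  have hbeq : bval 𝔖 A B u' v = bval 𝔖 A B u v := bval_eq hS hG h1 h2 h3 h4
  rcases bval_cases (𝔖 := 𝔖) (A := A) (B := B) u' v with h | ⟨W, hW, hcov, hlt, heq⟩
  · rw [hbeq] at h; exact absurd h (ne_of_gt hbot)
  · have hW1 : rhi W 1 = x 1 := by rw [heq, hbeq, hx1]
    have hWlo : rlo W 0 ≤ x 0 := by
      by_contra hc
      push_neg at hc
      have hWbad : W ∈ bad := Finset.mem_filter.2 ⟨hW, hc⟩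
      have : m ≤ rlo W 0 := by
        rw [hm]
        apply Finset.min'_le
        exact Finset.mem_insert_of_mem (Finset.mem_image.2 ⟨W, hWbad, rfl⟩)
      linarith [hcov.1]
    have hWhi : x 0 < rhi W 0 := lt_of_lt_of_le hu1 hcov.2
    refine ⟨W, hW, ?_, hW1, hWhi⟩
    rw [s_eq hS hW, mem_box]
    exact ⟨⟨hWlo, hWhi.le⟩, ⟨by rw [← hW1]; exact (s_nondeg hS hW 1).le, hW1.ge⟩⟩

/-- Witness extraction, west version. -/
lemma witness_BW (hS : ∀ Q ∈ 𝔖, IsRect Q ∧ Q ⊆ Icc A B) {u v : ℝ}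
    (hG : Gen 𝔖 A B u v) {x : Fin 2 → ℝ}
    (hx0l : lval 𝔖 A B u < x 0) (hx0r : x 0 ≤ rval 𝔖 A B u)
    (hx1 : x 1 = bval 𝔖 A B u v) (hbot : A 1 < bval 𝔖 A B u v) :
    ∃ W ∈ 𝔖, x ∈ W ∧ rhi W 1 = x 1 ∧ rlo W 0 < x 0 := by
  classical
  set bad := 𝔖.filter (fun W => rhi W 0 < x 0) with hbad
  set m := (insert (lval 𝔖 A B u) (bad.image fun W => rhi W 0)).max'
    (Finset.insert_nonempty _ _) with hm
  have hxm : m < x 0 := by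
    rw [hm]
    apply Finset.max'_lt_iff _ _ |>.2
    intro e he
    rcases Finset.mem_insert.1 he with rfl | he
    · exact hx0l
    · obtain ⟨W, hW, rfl⟩ := Finset.mem_image.1 he
      exact (Finset.mem_filter.1 hW).2
  have hmr : lval 𝔖 A B u ≤ m := Finset.le_max' _ _ (Finset.mem_insert_self _ _)
  set u' := (m + x 0) / 2 with hu'
  have hu1 : u' < x 0 := by rw [hu']; linarith
  have hu2 : m < u' := by rw [hu']; linarith
  have h1 : lval 𝔖 A B u < u' := lt_of_le_of_lt hmr hu2
  have h2 : u' < rval 𝔖 A B u := lt_of_lt_of_le hu1 hx0r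
  have h3 : bval 𝔖 A B u v < v := bval_lt hG.2.1.1
  have h4 : v < tval 𝔖 A B u v := lt_tval hG.2.1.2
  have hbeq : bval 𝔖 A B u' v = bval 𝔖 A B u v := bval_eq hS hG h1 h2 h3 h4
  rcases bval_cases (𝔖 := 𝔖) (A := A) (B := B) u' v with h | ⟨W, hW, hcov, hlt, heq⟩
  · rw [hbeq] at h; exact absurd h (ne_of_gt hbot)
  · have hW1 : rhi W 1 = x 1 := by rw [heq, hbeq, hx1]
    have hWhi : x 0 ≤ rhi W 0 := by
      by_contra hc
      push_neg at hc
      have hWbad : W ∈ bad := Finset.mem_filter.2 ⟨hW, hc⟩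
      have : rhi W 0 ≤ m := by
        rw [hm]
        apply Finset.le_max'
        exact Finset.mem_insert_of_mem (Finset.mem_image.2 ⟨W, hWbad, rfl⟩)
      linarith [hcov.2]
    have hWlo : rlo W 0 < x 0 := lt_of_le_of_lt hcov.1 hu1
    refine ⟨W, hW, ?_, hW1, hWlo⟩
    rw [s_eq hS hW, mem_box]
    exact ⟨⟨hWlo.le, hWhi⟩, ⟨by rw [← hW1]; exact (s_nondeg hS hW 1).le, hW1.ge⟩⟩

lemma quadrant_aux (hAB : ∀ i, A i < B i) (hS : ∀ Q ∈ 𝔖, IsRect Q ∧ Q ⊆ Icc A B)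
    {x : Fin 2 → ℝ} (hx : x ∈ interior (Icc A B)) {d0 d1 : ℝ}
    (hd0 : |d0| ≤ 1) (hd1 : |d1| ≤ 1) :
    ∃ K ∈ Part 𝔖 A B, x ∈ K ∧ ∃ δ : ℝ, 0 < δ ∧ ![x 0 + δ * d0, x 1 + δ * d1] ∈ K := by
  classical
  set Bad := {K | K ∈ Part 𝔖 A B ∧ x ∉ K} with hBad
  have hBadfin : Bad.Finite := part_finite.subset (fun K hK => hK.1)
  have hUclosed : IsClosed (⋃₀ Bad) := by
    rw [Set.sUnion_eq_biUnion]
    exact hBadfin.isClosed_biUnion (fun K hK => part_closed hS K hK.1)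
  have hxU : x ∉ ⋃₀ Bad := by rintro ⟨K, hK, hxK⟩; exact hK.2 hxK
  obtain ⟨ε₁, hε₁, hb₁⟩ := Metric.isOpen_iff.1 hUclosed.isOpen_compl x hxU
  obtain ⟨ε₂, hε₂, hb₂⟩ := Metric.isOpen_iff.1 isOpen_interior x hx
  set δ := min ε₁ ε₂ / 2 with hδ
  have hδpos : 0 < δ := by rw [hδ]; positivity
  set z := ![x 0 + δ * d0, x 1 + δ * d1] with hz
  have hdist : ∀ ε', δ < ε' → dist z x < ε' := by
    intro ε' hε'
    rw [dist_pi_lt_iff (lt_trans hδpos hε'), Fin.forall_fin_two]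
    rw [hz]
    simp only [Matrix.cons_val_zero, Matrix.cons_val_one, Matrix.head_cons, Real.dist_eq]
    constructor
    · rw [add_sub_cancel_left, abs_mul, abs_of_pos hδpos]
      nlinarith [abs_nonneg d0]
    · rw [add_sub_cancel_left, abs_mul, abs_of_pos hδpos]
      nlinarith [abs_nonneg d1]
  have hδ1 : δ < ε₁ := by
    rw [hδ]
    have := min_le_left ε₁ ε₂
    have := lt_min hε₁ hε₂
    linarith [min_le_left ε₁ ε₂, lt_min hε₁ hε₂]
  have hδ2 : δ < ε₂ := by
    linarith [min_le_right ε₁ ε₂, lt_min hε₁ hε₂]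
  have hzIcc : z ∈ Icc A B := interior_subset (hb₂ (by
    rw [Metric.mem_ball]; exact hdist ε₂ hδ2))
  rw [← part_union hAB hS] at hzIcc
  obtain ⟨K, hK, hzK⟩ := hzIcc
  have hxK : x ∈ K := by
    by_contra hc
    have : z ∈ ⋃₀ Bad := ⟨K, ⟨hK, hc⟩, hzK⟩
    exact hb₁ (by rw [Metric.mem_ball]; exact hdist ε₁ hδ1) this
  exact ⟨K, hK, hxK, δ, hδpos, hzK⟩

lemma quadNE (hAB : ∀ i, A i < B i) (hS : ∀ Q ∈ 𝔖, IsRect Q ∧ Q ⊆ Icc A B)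
    {x : Fin 2 → ℝ} (hx : x ∈ interior (Icc A B)) :
    ∃ K ∈ Part 𝔖 A B, x ∈ K ∧ x 0 < rhi K 0 ∧ x 1 < rhi K 1 := by
  obtain ⟨K, hK, hxK, δ, hδ, hzK⟩ := quadrant_aux hAB hS hx
    (d0 := 1) (d1 := 1) (by norm_num) (by norm_num)
  have spec := rect_spec (part_rect hS K hK)
  rw [spec.2, mem_box] at hzK
  simp only [Matrix.cons_val_zero, Matrix.cons_val_one, Matrix.head_cons, mul_one] at hzK
  exact ⟨K, hK, hxK, by linarith [hzK.1.2], by linarith [hzK.2.2]⟩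

lemma quadNW (hAB : ∀ i, A i < B i) (hS : ∀ Q ∈ 𝔖, IsRect Q ∧ Q ⊆ Icc A B)
    {x : Fin 2 → ℝ} (hx : x ∈ interior (Icc A B)) :
    ∃ K ∈ Part 𝔖 A B, x ∈ K ∧ rlo K 0 < x 0 ∧ x 1 < rhi K 1 := by
  obtain ⟨K, hK, hxK, δ, hδ, hzK⟩ := quadrant_aux hAB hS hx
    (d0 := -1) (d1 := 1) (by norm_num) (by norm_num)
  have spec := rect_spec (part_rect hS K hK)
  rw [spec.2, mem_box] at hzK
  simp only [Matrix.cons_val_zero, Matrix.cons_val_one, Matrix.head_cons, mul_one,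
    mul_neg_one] at hzK
  exact ⟨K, hK, hxK, by linarith [hzK.1.1], by linarith [hzK.2.2]⟩

lemma quadSW (hAB : ∀ i, A i < B i) (hS : ∀ Q ∈ 𝔖, IsRect Q ∧ Q ⊆ Icc A B)
    {x : Fin 2 → ℝ} (hx : x ∈ interior (Icc A B)) :
    ∃ K ∈ Part 𝔖 A B, x ∈ K ∧ rlo K 0 < x 0 ∧ rlo K 1 < x 1 := by
  obtain ⟨K, hK, hxK, δ, hδ, hzK⟩ := quadrant_aux hAB hS hx
    (d0 := -1) (d1 := -1) (by norm_num) (by norm_num)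
  have spec := rect_spec (part_rect hS K hK)
  rw [spec.2, mem_box] at hzK
  simp only [Matrix.cons_val_zero, Matrix.cons_val_one, Matrix.head_cons,
    mul_neg_one] at hzK
  exact ⟨K, hK, hxK, by linarith [hzK.1.1], by linarith [hzK.2.1]⟩

lemma quadSE (hAB : ∀ i, A i < B i) (hS : ∀ Q ∈ 𝔖, IsRect Q ∧ Q ⊆ Icc A B)
    {x : Fin 2 → ℝ} (hx : x ∈ interior (Icc A B)) :
    ∃ K ∈ Part 𝔖 A B, x ∈ K ∧ x 0 < rhi K 0 ∧ rlo K 1 < x 1 := by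
  obtain ⟨K, hK, hxK, δ, hδ, hzK⟩ := quadrant_aux hAB hS hx
    (d0 := 1) (d1 := -1) (by norm_num) (by norm_num)
  have spec := rect_spec (part_rect hS K hK)
  rw [spec.2, mem_box] at hzK
  simp only [Matrix.cons_val_zero, Matrix.cons_val_one, Matrix.head_cons, mul_one,
    mul_neg_one] at hzK
  exact ⟨K, hK, hxK, by linarith [hzK.1.2], by linarith [hzK.2.1]⟩

lemma lin_sep {a b a' b' t : ℝ} (h : a ≤ t ∧ t ≤ b) (h' : a' ≤ t ∧ t ≤ b')
    (hc : (t < b ∧ t < b') ∨ (a < t ∧ a' < t)) :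
    ∃ z, (a < z ∧ z < b) ∧ (a' < z ∧ z < b') := by
  rcases hc with ⟨hc1, hc2⟩ | ⟨hc1, hc2⟩
  · rcases le_total b b' with hb | hb
    · exact ⟨(t + b) / 2, ⟨by linarith [h.1], by linarith⟩, ⟨by linarith [h'.1], by linarith⟩⟩
    · exact ⟨(t + b') / 2, ⟨by linarith [h.1], by linarith⟩, ⟨by linarith [h'.1], by linarith⟩⟩
  · rcases le_total a a' with ha | ha
    · exact ⟨(a' + t) / 2, ⟨by linarith, by linarith [h.2]⟩, ⟨by linarith, by linarith [h'.2]⟩⟩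
    · exact ⟨(a + t) / 2, ⟨by linarith, by linarith [h.2]⟩, ⟨by linarith, by linarith [h'.2]⟩⟩

/-- two members of the partition sharing a quadrant at `x` coincide -/
lemma members_eq (hS : ∀ Q ∈ 𝔖, IsRect Q ∧ Q ⊆ Icc A B)
    (hd : ∀ Q₁ ∈ 𝔖, ∀ Q₂ ∈ 𝔖, Q₁ ≠ Q₂ → Q₁ ∩ Q₂ = ∅)
    {x : Fin 2 → ℝ} {K K' : Set (Fin 2 → ℝ)}
    (hK : K ∈ Part 𝔖 A B) (hK' : K' ∈ Part 𝔖 A B) (hxK : x ∈ K) (hxK' : x ∈ K')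
    (h0 : (x 0 < rhi K 0 ∧ x 0 < rhi K' 0) ∨ (rlo K 0 < x 0 ∧ rlo K' 0 < x 0))
    (h1 : (x 1 < rhi K 1 ∧ x 1 < rhi K' 1) ∨ (rlo K 1 < x 1 ∧ rlo K' 1 < x 1)) :
    K = K' := by
  by_contra hne
  have hdis := part_disjoint hS hd K hK K' hK' hne
  have sK := rect_spec (part_rect hS K hK)
  have sK' := rect_spec (part_rect hS K' hK')
  rw [sK.2, mem_box] at hxK
  rw [sK'.2, mem_box] at hxK'
  obtain ⟨z0, hz0, hz0'⟩ := lin_sep ⟨hxK.1.1, hxK.1.2⟩ ⟨hxK'.1.1, hxK'.1.2⟩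
    (by rcases h0 with h | h; exacts [Or.inl h, Or.inr h])
  obtain ⟨z1, hz1, hz1'⟩ := lin_sep ⟨hxK.2.1, hxK.2.2⟩ ⟨hxK'.2.1, hxK'.2.2⟩
    (by rcases h1 with h | h; exacts [Or.inl h, Or.inr h])
  have hmem : ![z0, z1] ∈ interior K ∩ interior K' := by
    constructor
    · rw [sK.2, mem_interior_box]
      simp only [Matrix.cons_val_zero, Matrix.cons_val_one, Matrix.head_cons]
      exact ⟨hz0, hz1⟩
    · rw [sK'.2, mem_interior_box]
      simp only [Matrix.cons_val_zero, Matrix.cons_val_one, Matrix.head_cons]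
      exact ⟨hz0', hz1'⟩
  rw [hdis] at hmem
  exact hmem

lemma bdry_iff (hS : ∀ Q ∈ 𝔖, IsRect Q ∧ Q ⊆ Icc A B) {x : Fin 2 → ℝ} (j : Fin 2) :
    IsBoundaryVector (Part 𝔖 A B) x j ↔
      ∃ K, (K ∈ Part 𝔖 A B ∧ x ∈ K) ∧ (x j = rlo K j ∨ x j = rhi K j) := by
  constructor
  · rintro ⟨Q, hQ, F, ⟨a, b, hab, hQeq, hFor⟩, hxF⟩
    have spec := rect_spec (part_rect hS Q hQ)
    have hinj := box_inj hab (hQeq.symm.trans spec.2)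
    rcases hFor with rfl | rfl
    · exact ⟨Q, ⟨hQ, hxF.1⟩, Or.inl (by rw [← hinj.1]; exact hxF.2)⟩
    · exact ⟨Q, ⟨hQ, hxF.1⟩, Or.inr (by rw [← hinj.2]; exact hxF.2)⟩
  · rintro ⟨K, ⟨hK, hxK⟩, hor⟩
    have spec := rect_spec (part_rect hS K hK)
    rcases hor with h | h
    · exact ⟨K, hK, {y ∈ K | y j = rlo K j},
        ⟨rlo K, rhi K, spec.1, spec.2, Or.inl rfl⟩, ⟨hxK, h⟩⟩
    · exact ⟨K, hK, {y ∈ K | y j = rhi K j},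
        ⟨rlo K, rhi K, spec.1, spec.2, Or.inr rfl⟩, ⟨hxK, h⟩⟩

end Geo

end Stmt10

namespace Stmt10

section Count

variable {𝔖 : Finset (Set (Fin 2 → ℝ))} {A B : Fin 2 → ℝ}

lemma count (hAB : ∀ i, A i < B i) (hS : ∀ Q ∈ 𝔖, IsRect Q ∧ Q ⊆ Icc A B)
    (hd : ∀ Q₁ ∈ 𝔖, ∀ Q₂ ∈ 𝔖, Q₁ ≠ Q₂ → Q₁ ∩ Q₂ = ∅)
    {x : Fin 2 → ℝ} (hx : x ∈ interior (Icc A B)) :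
    nuP (Part 𝔖 A B) x = betaP (Part 𝔖 A B) x + 1 := by
  classical
  have hxi := mem_interior_box.1 hx
  have hrep : ∀ K, K ∈ Part 𝔖 A B → x ∈ K →
      (rlo K 0 ≤ x 0 ∧ x 0 ≤ rhi K 0) ∧ (rlo K 1 ≤ x 1 ∧ x 1 ≤ rhi K 1) := by
    intro K hK hxK
    have spec := rect_spec (part_rect hS K hK)
    rw [spec.2, mem_box] at hxK
    exact hxK
  have hnd : ∀ K, K ∈ Part 𝔖 A B → ∀ i, rlo K i < rhi K i := by
    intro K hK
    exact (rect_spec (part_rect hS K hK)).1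
  have totE : ∀ K, K ∈ Part 𝔖 A B → x ∈ K → rlo K 0 < x 0 ∨ x 0 < rhi K 0 := by
    intro K hK hxK
    rcases lt_or_eq_of_le (hrep K hK hxK).1.1 with h | h
    · exact Or.inl h
    · exact Or.inr (by rw [← h]; exact hnd K hK 0)
  have totN : ∀ K, K ∈ Part 𝔖 A B → x ∈ K → rlo K 1 < x 1 ∨ x 1 < rhi K 1 := by
    intro K hK hxK
    rcases lt_or_eq_of_le (hrep K hK hxK).2.1 with h | h
    · exact Or.inl h
    · exact Or.inr (by rw [← h]; exact hnd K hK 1)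
  obtain ⟨Kne, hKne, hxne, hene, hnne⟩ := quadNE hAB hS hx
  obtain ⟨Knw, hKnw, hxnw, hwnw, hnnw⟩ := quadNW hAB hS hx
  obtain ⟨Ksw, hKsw, hxsw, hwsw, hssw⟩ := quadSW hAB hS hx
  obtain ⟨Kse, hKse, hxse, hese, hsse⟩ := quadSE hAB hS hx
  have hb0 := bdry_iff (A := A) (B := B) hS (x := x) 0
  have hb1 := bdry_iff (A := A) (B := B) hS (x := x) 1
  have hM4 : {Q | Q ∈ Part 𝔖 A B ∧ x ∈ Q} = {Kne, Knw, Ksw, Kse} := by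
    ext K
    simp only [Set.mem_setOf_eq, Set.mem_insert_iff, Set.mem_singleton_iff]
    constructor
    · rintro ⟨hK, hxK⟩
      rcases totE K hK hxK with he | he <;> rcases totN K hK hxK with hn | hn
      · exact Or.inr (Or.inr (Or.inl
          (members_eq hS hd hK hKsw hxK hxsw (Or.inr ⟨he, hwsw⟩) (Or.inr ⟨hn, hssw⟩))))
      · exact Or.inr (Or.inl
          (members_eq hS hd hK hKnw hxK hxnw (Or.inr ⟨he, hwnw⟩) (Or.inl ⟨hn, hnnw⟩)))
      · exact Or.inr (Or.inr (Or.inr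
          (members_eq hS hd hK hKse hxK hxse (Or.inl ⟨he, hese⟩) (Or.inr ⟨hn, hsse⟩))))
      · exact Or.inl
          (members_eq hS hd hK hKne hxK hxne (Or.inl ⟨he, hene⟩) (Or.inl ⟨hn, hnne⟩))
    · rintro (rfl | rfl | rfl | rfl)
      exacts [⟨hKne, hxne⟩, ⟨hKnw, hxnw⟩, ⟨hKsw, hxsw⟩, ⟨hKse, hxse⟩]
  have memM : ∀ K₀, K₀ ∈ Part 𝔖 A B → x ∈ K₀ →
      K₀ = Kne ∨ K₀ = Knw ∨ K₀ = Ksw ∨ K₀ = Kse := by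
    intro K₀ hK hxK
    have : K₀ ∈ ({Kne, Knw, Ksw, Kse} : Set (Set (Fin 2 → ℝ))) := by
      rw [← hM4]; exact ⟨hK, hxK⟩
    simpa using this
  have fullContra : ∀ K, K ∈ Part 𝔖 A B → x ∈ K →
      (rlo K 0 < x 0 ∧ x 0 < rhi K 0) → (rlo K 1 < x 1 ∧ x 1 < rhi K 1) →
      (∃ K₀, (K₀ ∈ Part 𝔖 A B ∧ x ∈ K₀) ∧ (x 0 = rlo K₀ 0 ∨ x 0 = rhi K₀ 0)) → False := by
    rintro K hK hxK hH hV ⟨K₀, ⟨hK₀, hxK₀⟩, hor⟩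
    have heq : K₀ = K := by
      apply members_eq hS hd hK₀ hK hxK₀ hxK
      · rcases totE K₀ hK₀ hxK₀ with h | h
        · exact Or.inr ⟨h, hH.1⟩
        · exact Or.inl ⟨h, hH.2⟩
      · rcases totN K₀ hK₀ hxK₀ with h | h
        · exact Or.inr ⟨h, hV.1⟩
        · exact Or.inl ⟨h, hV.2⟩
    subst heq
    rcases hor with h | h
    · linarith [hH.1]
    · linarith [hH.2]
  by_cases h0 : ∃ K₀, (K₀ ∈ Part 𝔖 A B ∧ x ∈ K₀) ∧ (x 0 = rlo K₀ 0 ∨ x 0 = rhi K₀ 0) <;>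
    by_cases h1 : ∃ K₁, (K₁ ∈ Part 𝔖 A B ∧ x ∈ K₁) ∧ (x 1 = rlo K₁ 1 ∨ x 1 = rhi K₁ 1)
  · -- H0 ∧ H1 : T-junction, ν = 3, β = 2
    have hbset : {j | IsBoundaryVector (Part 𝔖 A B) x j} = Set.univ := by
      ext j
      simp only [Set.mem_setOf_eq, Set.mem_univ, iff_true]
      fin_cases j
      · exact hb0.2 h0
      · exact hb1.2 h1
    have hbeta : betaP (Part 𝔖 A B) x = 2 := by
      rw [betaP, hbset, Set.ncard_univ]
      simp
    by_cases c1 : Kne = Knw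
    · -- top half piece
      have hwne : rlo Kne 0 < x 0 := by rw [c1]; exact hwnw
      have hsne : ¬ rlo Kne 1 < x 1 := fun hs =>
        fullContra Kne hKne hxne ⟨hwne, hene⟩ ⟨hs, hnne⟩ h0
      have hswse : Ksw ≠ Kse := by
        intro c2
        obtain ⟨K₀, ⟨hK₀, hxK₀⟩, hor⟩ := h0
        rcases memM K₀ hK₀ hxK₀ with rfl | rfl | rfl | rfl
        · rcases hor with h | h
          · linarith
          · linarith
        · rcases hor with h | h
          · rw [← c1] at h; linarith
          · rw [← c1] at h; linarith
        · rcases hor with h | h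
          · linarith
          · rw [c2] at h; linarith
        · rcases hor with h | h
          · rw [← c2] at h; linarith [hwsw]
          · linarith
      have hnesw : Kne ≠ Ksw := fun c => hsne (by rw [c]; exact hssw)
      have hnese : Kne ≠ Kse := fun c => hsne (by rw [c]; exact hsse)
      have hMeq : {Q | Q ∈ Part 𝔖 A B ∧ x ∈ Q} = {Kne, Ksw, Kse} := by
        rw [hM4]
        ext K
        simp only [Set.mem_insert_iff, Set.mem_singleton_iff]
        constructor
        · rintro (rfl | rfl | rfl | rfl)
          · exact Or.inl rfl
          · exact Or.inl c1.symm
          · exact Or.inr (Or.inl rfl)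
          · exact Or.inr (Or.inr rfl)
        · rintro (rfl | rfl | rfl)
          · exact Or.inl rfl
          · exact Or.inr (Or.inr (Or.inl rfl))
          · exact Or.inr (Or.inr (Or.inr rfl))
      rw [nuP, hMeq, hbeta]
      rw [Set.ncard_insert_of_notMem (by simp [hnesw, hnese]) (Set.toFinite _),
        Set.ncard_pair hswse]
    · by_cases c2 : Ksw = Kse
      · -- bottom half piece
        have hesw : x 0 < rhi Ksw 0 := by rw [c2]; exact hese
        have hnsw : ¬ x 1 < rhi Ksw 1 := fun hn =>
          fullContra Ksw hKsw hxsw ⟨hwsw, hesw⟩ ⟨hssw, hn⟩ h0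
        have hnesw : Kne ≠ Ksw := fun c => hnsw (by rw [← c]; exact hnne)
        have hnwsw : Knw ≠ Ksw := fun c => hnsw (by rw [← c]; exact hnnw)
        have hMeq : {Q | Q ∈ Part 𝔖 A B ∧ x ∈ Q} = {Kne, Knw, Ksw} := by
          rw [hM4]
          ext K
          simp only [Set.mem_insert_iff, Set.mem_singleton_iff]
          constructor
          · rintro (rfl | rfl | rfl | rfl)
            · exact Or.inl rfl
            · exact Or.inr (Or.inl rfl)
            · exact Or.inr (Or.inr rfl)
            · exact Or.inr (Or.inr c2.symm)
          · rintro (rfl | rfl | rfl)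
            · exact Or.inl rfl
            · exact Or.inr (Or.inl rfl)
            · exact Or.inr (Or.inr (Or.inl rfl))
        rw [nuP, hMeq, hbeta]
        rw [Set.ncard_insert_of_notMem (by simp [c1, hnesw]) (Set.toFinite _),
          Set.ncard_pair hnwsw]
      · by_cases c3 : Kne = Kse
        · -- right half piece
          have hsne : rlo Kne 1 < x 1 := by rw [c3]; exact hsse
          have hwne : ¬ rlo Kne 0 < x 0 := fun hw =>
            fullContra Kne hKne hxne ⟨hw, hene⟩ ⟨hsne, hnne⟩ h0
          have hnwsw : Knw ≠ Ksw := by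
            intro c4
            obtain ⟨K₁, ⟨hK₁, hxK₁⟩, hor⟩ := h1
            rcases memM K₁ hK₁ hxK₁ with rfl | rfl | rfl | rfl
            · rcases hor with h | h
              · linarith
              · linarith
            · rcases hor with h | h
              · rw [c4] at h; linarith
              · linarith
            · rcases hor with h | h
              · linarith
              · rw [← c4] at h; linarith
            · rcases hor with h | h
              · rw [← c3] at h; linarith
              · rw [← c3] at h; linarith
          have hnenw : Kne ≠ Knw := c1
          have hneswd : Kne ≠ Ksw := fun c => hwne (by rw [c]; exact hwsw)
          have hMeq : {Q | Q ∈ Part 𝔖 A B ∧ x ∈ Q} = {Kne, Knw, Ksw} := by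
            rw [hM4]
            ext K
            simp only [Set.mem_insert_iff, Set.mem_singleton_iff]
            constructor
            · rintro (rfl | rfl | rfl | rfl)
              · exact Or.inl rfl
              · exact Or.inr (Or.inl rfl)
              · exact Or.inr (Or.inr rfl)
              · exact Or.inl c3.symm
            · rintro (rfl | rfl | rfl)
              · exact Or.inl rfl
              · exact Or.inr (Or.inl rfl)
              · exact Or.inr (Or.inr (Or.inl rfl))
          rw [nuP, hMeq, hbeta]
          rw [Set.ncard_insert_of_notMem (by simp [hnenw, hneswd]) (Set.toFinite _),
            Set.ncard_pair hnwsw]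
        · by_cases c4 : Knw = Ksw
          · -- left half piece
            have hsnw : rlo Knw 1 < x 1 := by rw [c4]; exact hssw
            have henw : ¬ x 0 < rhi Knw 0 := fun he =>
              fullContra Knw hKnw hxnw ⟨hwnw, he⟩ ⟨hsnw, hnnw⟩ h0
            have hnwse : Knw ≠ Kse := fun c => henw (by rw [c]; exact hese)
            have hMeq : {Q | Q ∈ Part 𝔖 A B ∧ x ∈ Q} = {Kne, Knw, Kse} := by
              rw [hM4]
              ext K
              simp only [Set.mem_insert_iff, Set.mem_singleton_iff]
              constructor
              · rintro (rfl | rfl | rfl | rfl)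
                · exact Or.inl rfl
                · exact Or.inr (Or.inl rfl)
                · exact Or.inr (Or.inl c4.symm)
                · exact Or.inr (Or.inr rfl)
              · rintro (rfl | rfl | rfl)
                · exact Or.inl rfl
                · exact Or.inr (Or.inl rfl)
                · exact Or.inr (Or.inr (Or.inr rfl))
            rw [nuP, hMeq, hbeta]
            rw [Set.ncard_insert_of_notMem (by simp [c1, c3]) (Set.toFinite _),
              Set.ncard_pair hnwse]
          · -- four distinct corners : impossible
            exfalso
            have diag1 : Kne ≠ Ksw := fun c =>
              fullContra Kne hKne hxne ⟨by rw [c]; exact hwsw, hene⟩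
                ⟨by rw [c]; exact hssw, hnne⟩ h0
            have diag2 : Knw ≠ Kse := fun c =>
              fullContra Knw hKnw hxnw ⟨hwnw, by rw [c]; exact hese⟩
                ⟨by rw [c]; exact hsse, hnnw⟩ h0
            have hne_w : x 0 = rlo Kne 0 := by
              rcases lt_or_eq_of_le (hrep Kne hKne hxne).1.1 with h | h
              · exact absurd (members_eq hS hd hKne hKnw hxne hxnw
                  (Or.inr ⟨h, hwnw⟩) (Or.inl ⟨hnne, hnnw⟩)) c1
              · exact h.symm
            have hne_s : x 1 = rlo Kne 1 := by
              rcases lt_or_eq_of_le (hrep Kne hKne hxne).2.1 with h | h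
              · exact absurd (members_eq hS hd hKne hKse hxne hxse
                  (Or.inl ⟨hene, hese⟩) (Or.inr ⟨h, hsse⟩)) c3
              · exact h.symm
            have hnw_e : x 0 = rhi Knw 0 := by
              rcases lt_or_eq_of_le (hrep Knw hKnw hxnw).1.2 with h | h
              · exact absurd (members_eq hS hd hKne hKnw hxne hxnw
                  (Or.inl ⟨hene, h⟩) (Or.inl ⟨hnne, hnnw⟩)) c1
              · exact h
            have hnw_s : x 1 = rlo Knw 1 := by
              rcases lt_or_eq_of_le (hrep Knw hKnw hxnw).2.1 with h | h
              · exact absurd (members_eq hS hd hKnw hKsw hxnw hxsw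
                  (Or.inr ⟨hwnw, hwsw⟩) (Or.inr ⟨h, hssw⟩)) c4
              · exact h.symm
            have hsw_e : x 0 = rhi Ksw 0 := by
              rcases lt_or_eq_of_le (hrep Ksw hKsw hxsw).1.2 with h | h
              · exact absurd (members_eq hS hd hKsw hKse hxsw hxse
                  (Or.inl ⟨h, hese⟩) (Or.inr ⟨hssw, hsse⟩)) c2
              · exact h
            have hse_w : x 0 = rlo Kse 0 := by
              rcases lt_or_eq_of_le (hrep Kse hKse hxse).1.1 with h | h
              · exact absurd (members_eq hS hd hKsw hKse hxsw hxse
                  (Or.inr ⟨hwsw, h⟩) (Or.inr ⟨hssw, hsse⟩)) c2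
              · exact h.symm
            -- the NE member (if a cell) forces the SE member to be a rectangle of 𝔖
            have Sne : Kne ∈ 𝔖 ∨ Kse ∈ 𝔖 := by
              rcases hKne with h | ⟨u, v, hG, hKeq⟩
              · exact Or.inl (by exact_mod_cast h)
              · right
                subst hKeq
                have hcor := cell_corners hG
                have hx1b : x 1 = bval 𝔖 A B u v := by
                  have h' := hne_s
                  rw [hcor.1] at h'
                  simpa using h'
                have hx0e : x 0 = lval 𝔖 A B u := by
                  have h' := hne_w
                  rw [hcor.1] at h'
                  simpa using h'
                have hx0r : x 0 < rval 𝔖 A B u := by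
                  rw [hx0e]
                  exact lt_trans (lval_lt hG.1.1) (lt_rval hG.1.2)
                have hbot : A 1 < bval 𝔖 A B u v := by
                  rw [← hx1b]; exact hxi.2.1
                obtain ⟨W, hW, hxW, hW1, hW0⟩ := witness_BE hS hG hx0e.ge hx0r hx1b hbot
                have hWP : W ∈ Part 𝔖 A B := Or.inl (by exact_mod_cast hW)
                rcases memM W hWP hxW with rfl | rfl | rfl | rfl
                · -- W = the NE cell : its top is above x
                  linarith [hW1.le, hnne]
                · linarith [hnnw, hW1.le]
                · rw [← hsw_e] at hW0; linarith
                · exact hW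
            have Snw : Knw ∈ 𝔖 ∨ Ksw ∈ 𝔖 := by
              rcases hKnw with h | ⟨u, v, hG, hKeq⟩
              · exact Or.inl (by exact_mod_cast h)
              · right
                subst hKeq
                have hcor := cell_corners hG
                have hx1b : x 1 = bval 𝔖 A B u v := by
                  have h' := hnw_s
                  rw [hcor.1] at h'
                  simpa using h'
                have hx0e : x 0 = rval 𝔖 A B u := by
                  have h' := hnw_e
                  rw [hcor.2] at h'
                  simpa using h'
                have hx0l : lval 𝔖 A B u < x 0 := by
                  rw [hx0e]
                  exact lt_trans (lval_lt hG.1.1) (lt_rval hG.1.2)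
                have hbot : A 1 < bval 𝔖 A B u v := by
                  rw [← hx1b]; exact hxi.2.1
                obtain ⟨W, hW, hxW, hW1, hW0⟩ := witness_BW hS hG hx0l hx0e.le hx1b hbot
                have hWP : W ∈ Part 𝔖 A B := Or.inl (by exact_mod_cast hW)
                rcases memM W hWP hxW with rfl | rfl | rfl | rfl
                · linarith [hnne, hW1.le]
                · linarith [hnnw, hW1.le]
                · exact hW
                · rw [← hse_w] at hW0; linarith
            have hget : ∀ Q₁ Q₂ : Set (Fin 2 → ℝ), Q₁ ∈ 𝔖 → Q₂ ∈ 𝔖 → Q₁ ≠ Q₂ →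
                x ∈ Q₁ → x ∈ Q₂ → False := by
              intro Q₁ Q₂ hQ₁ hQ₂ hne hx₁ hx₂
              have := hd Q₁ hQ₁ Q₂ hQ₂ hne
              have hmem : x ∈ Q₁ ∩ Q₂ := ⟨hx₁, hx₂⟩
              rw [this] at hmem
              exact hmem
            rcases Sne with hQ1 | hQ1 <;> rcases Snw with hQ2 | hQ2
            · exact hget Kne Knw hQ1 hQ2 c1 hxne hxnw
            · exact hget Kne Ksw hQ1 hQ2 diag1 hxne hxsw
            · exact hget Kse Knw hQ1 hQ2 (fun c => diag2 c.symm) hxse hxnw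
            · exact hget Kse Ksw hQ1 hQ2 (fun c => c2 c.symm) hxse hxsw
  · -- H0 ∧ ¬H1 : vertical wall point, ν = 2, β = 1
    have strictN : ∀ K, K ∈ Part 𝔖 A B → x ∈ K →
        rlo K 1 < x 1 ∧ x 1 < rhi K 1 := by
      intro K hK hxK
      have hb := (hrep K hK hxK).2
      exact ⟨lt_of_le_of_ne hb.1 (fun c => h1 ⟨K, ⟨hK, hxK⟩, Or.inl c.symm⟩),
        lt_of_le_of_ne hb.2 (fun c => h1 ⟨K, ⟨hK, hxK⟩, Or.inr c⟩)⟩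
    have hnenw : Kne ≠ Knw := by
      intro c
      obtain ⟨K₀, ⟨hK₀, hxK₀⟩, hor⟩ := h0
      have hKeq : K₀ = Kne ∨ K₀ = Knw := by
        rcases totE K₀ hK₀ hxK₀ with h | h
        · exact Or.inr (members_eq hS hd hK₀ hKnw hxK₀ hxnw (Or.inr ⟨h, hwnw⟩)
            (Or.inl ⟨(strictN K₀ hK₀ hxK₀).2, (strictN Knw hKnw hxnw).2⟩))
        · exact Or.inl (members_eq hS hd hK₀ hKne hxK₀ hxne (Or.inl ⟨h, hene⟩)
            (Or.inl ⟨(strictN K₀ hK₀ hxK₀).2, (strictN Kne hKne hxne).2⟩))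
      rcases hKeq with rfl | rfl
      · rcases hor with h | h
        · rw [c] at h; linarith
        · linarith
      · rcases hor with h | h
        · linarith
        · rw [← c] at h; linarith
    have hMeq : {Q | Q ∈ Part 𝔖 A B ∧ x ∈ Q} = {Kne, Knw} := by
      ext K
      simp only [Set.mem_setOf_eq, Set.mem_insert_iff, Set.mem_singleton_iff]
      constructor
      · rintro ⟨hK, hxK⟩
        rcases totE K hK hxK with h | h
        · exact Or.inr (members_eq hS hd hK hKnw hxK hxnw (Or.inr ⟨h, hwnw⟩)
            (Or.inl ⟨(strictN K hK hxK).2, (strictN Knw hKnw hxnw).2⟩))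
        · exact Or.inl (members_eq hS hd hK hKne hxK hxne (Or.inl ⟨h, hene⟩)
            (Or.inl ⟨(strictN K hK hxK).2, (strictN Kne hKne hxne).2⟩))
      · rintro (rfl | rfl)
        exacts [⟨hKne, hxne⟩, ⟨hKnw, hxnw⟩]
    have hbset : {j | IsBoundaryVector (Part 𝔖 A B) x j} = {0} := by
      ext j
      fin_cases j
      · simp only [Set.mem_setOf_eq, Set.mem_singleton_iff]
        exact iff_of_true (hb0.2 h0) rfl
      · simp only [Set.mem_setOf_eq, Set.mem_singleton_iff]
        exact iff_of_false (fun hb => h1 (hb1.1 hb)) (by decide)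
    rw [nuP, hMeq, betaP, hbset, Set.ncard_pair hnenw, Set.ncard_singleton]
  · -- ¬H0 ∧ H1 : horizontal wall point, ν = 2, β = 1
    have strictE : ∀ K, K ∈ Part 𝔖 A B → x ∈ K →
        rlo K 0 < x 0 ∧ x 0 < rhi K 0 := by
      intro K hK hxK
      have hb := (hrep K hK hxK).1
      exact ⟨lt_of_le_of_ne hb.1 (fun c => h0 ⟨K, ⟨hK, hxK⟩, Or.inl c.symm⟩),
        lt_of_le_of_ne hb.2 (fun c => h0 ⟨K, ⟨hK, hxK⟩, Or.inr c⟩)⟩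
    have hnese : Kne ≠ Kse := by
      intro c
      obtain ⟨K₁, ⟨hK₁, hxK₁⟩, hor⟩ := h1
      have hKeq : K₁ = Kne ∨ K₁ = Kse := by
        rcases totN K₁ hK₁ hxK₁ with h | h
        · exact Or.inr (members_eq hS hd hK₁ hKse hxK₁ hxse
            (Or.inl ⟨(strictE K₁ hK₁ hxK₁).2, (strictE Kse hKse hxse).2⟩)
            (Or.inr ⟨h, hsse⟩))
        · exact Or.inl (members_eq hS hd hK₁ hKne hxK₁ hxne
            (Or.inl ⟨(strictE K₁ hK₁ hxK₁).2, (strictE Kne hKne hxne).2⟩)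
            (Or.inl ⟨h, hnne⟩))
      rcases hKeq with rfl | rfl
      · rcases hor with h | h
        · rw [c] at h; linarith
        · linarith
      · rcases hor with h | h
        · linarith
        · rw [← c] at h; linarith
    have hMeq : {Q | Q ∈ Part 𝔖 A B ∧ x ∈ Q} = {Kne, Kse} := by
      ext K
      simp only [Set.mem_setOf_eq, Set.mem_insert_iff, Set.mem_singleton_iff]
      constructor
      · rintro ⟨hK, hxK⟩
        rcases totN K hK hxK with h | h
        · exact Or.inr (members_eq hS hd hK hKse hxK hxse
            (Or.inl ⟨(strictE K hK hxK).2, (strictE Kse hKse hxse).2⟩)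
            (Or.inr ⟨h, hsse⟩))
        · exact Or.inl (members_eq hS hd hK hKne hxK hxne
            (Or.inl ⟨(strictE K hK hxK).2, (strictE Kne hKne hxne).2⟩)
            (Or.inl ⟨h, hnne⟩))
      · rintro (rfl | rfl)
        exacts [⟨hKne, hxne⟩, ⟨hKse, hxse⟩]
    have hbset : {j | IsBoundaryVector (Part 𝔖 A B) x j} = {1} := by
      ext j
      fin_cases j
      · simp only [Set.mem_setOf_eq, Set.mem_singleton_iff]
        exact iff_of_false (fun hb => h0 (hb0.1 hb)) (by decide)
      · simp only [Set.mem_setOf_eq, Set.mem_singleton_iff]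
        exact iff_of_true (hb1.2 h1) rfl
    rw [nuP, hMeq, betaP, hbset, Set.ncard_pair hnese, Set.ncard_singleton]
  · -- interior point of a single member : ν = 1, β = 0
    have strictE : ∀ K, K ∈ Part 𝔖 A B → x ∈ K →
        rlo K 0 < x 0 ∧ x 0 < rhi K 0 := by
      intro K hK hxK
      have hb := (hrep K hK hxK).1
      exact ⟨lt_of_le_of_ne hb.1 (fun c => h0 ⟨K, ⟨hK, hxK⟩, Or.inl c.symm⟩),
        lt_of_le_of_ne hb.2 (fun c => h0 ⟨K, ⟨hK, hxK⟩, Or.inr c⟩)⟩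
    have strictN : ∀ K, K ∈ Part 𝔖 A B → x ∈ K →
        rlo K 1 < x 1 ∧ x 1 < rhi K 1 := by
      intro K hK hxK
      have hb := (hrep K hK hxK).2
      exact ⟨lt_of_le_of_ne hb.1 (fun c => h1 ⟨K, ⟨hK, hxK⟩, Or.inl c.symm⟩),
        lt_of_le_of_ne hb.2 (fun c => h1 ⟨K, ⟨hK, hxK⟩, Or.inr c⟩)⟩
    have hMeq : {Q | Q ∈ Part 𝔖 A B ∧ x ∈ Q} = {Kne} := by
      ext K
      simp only [Set.mem_setOf_eq, Set.mem_singleton_iff]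
      constructor
      · rintro ⟨hK, hxK⟩
        exact members_eq hS hd hK hKne hxK hxne
          (Or.inl ⟨(strictE K hK hxK).2, (strictE Kne hKne hxne).2⟩)
          (Or.inl ⟨(strictN K hK hxK).2, (strictN Kne hKne hxne).2⟩)
      · rintro rfl
        exact ⟨hKne, hxne⟩
    have hbset : {j | IsBoundaryVector (Part 𝔖 A B) x j} = ∅ := by
      ext j
      simp only [Set.mem_setOf_eq, Set.mem_empty_iff_false, iff_false]
      fin_cases j
      · exact fun hb => h0 (hb0.1 hb)
      · exact fun hb => h1 (hb1.1 hb)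
    rw [nuP, hMeq, betaP, hbset, Set.ncard_singleton, Set.ncard_empty]

end Count

end Stmt10

/-- every finite collection of pairwise disjoint subrectangles of a
2-dimensional rectangle `R` extends to a minimal locally regulated partition of `R`. -/
theorem stmt10 (R : Set (Fin 2 → ℝ)) (hR : IsRect R)
    (S : Set (Set (Fin 2 → ℝ))) (hfin : S.Finite)
    (hsub : ∀ Q ∈ S, IsRect Q ∧ Q ⊆ R)
    (hdisj : ∀ Q₁ ∈ S, ∀ Q₂ ∈ S, Q₁ ≠ Q₂ → Q₁ ∩ Q₂ = ∅) :
    ∃ P : Set (Set (Fin 2 → ℝ)), IsLocRegPartition R P ∧ S ⊆ P ∧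
      ∀ x ∈ interior R, nuP P x = betaP P x + 1 := by
  classical
  obtain ⟨A, B, hAB, rfl⟩ := hR
  set 𝔖 := hfin.toFinset with h𝔖
  have hco : (↑𝔖 : Set (Set (Fin 2 → ℝ))) = S := hfin.coe_toFinset
  have hS' : ∀ Q ∈ 𝔖, IsRect Q ∧ Q ⊆ Set.Icc A B := fun Q hQ =>
    hsub Q (hfin.mem_toFinset.1 hQ)
  have hd' : ∀ Q₁ ∈ 𝔖, ∀ Q₂ ∈ 𝔖, Q₁ ≠ Q₂ → Q₁ ∩ Q₂ = ∅ := fun Q₁ h₁ Q₂ h₂ hne =>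
    hdisj Q₁ (hfin.mem_toFinset.1 h₁) Q₂ (hfin.mem_toFinset.1 h₂) hne
  refine ⟨Stmt10.Part 𝔖 A B,
    ⟨⟨Stmt10.part_finite, Stmt10.part_rect hS', Stmt10.part_union hAB hS'⟩,
      Stmt10.part_disjoint hS' hd'⟩, ?_, ?_⟩
  · intro Q hQ
    exact Or.inl (by rw [hco]; exact hQ)
  · intro x hx
    exact Stmt10.count hAB hS' hd' hx
end

section
/- Let ℤ² act freely on a Polish space X by a Borel action. Then there exists a Borel minimal regulated partition of X: a partition 𝒫 of X such that each element of 𝒫 has the form S·x = {g·x : g ∈ S} for some x ∈ X and some 2-dimensional rectangle S in ℤ², such that for every g ∈ ℤ² the set {x ∈ X : x and g·x belong to the same element of 𝒫} is Borel, and such that for every x ∈ X the induced partition {S ⊆ ℤ² : S·x ∈ 𝒫} of ℤ² is 3-regulated. -/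
set_option linter.unusedSectionVars false
set_option maxHeartbeats 1000000

/-- A rectangle in `ℤ²`. -/
def IsZRect (S : Set (Fin 2 → ℤ)) : Prop :=
  ∃ a b : Fin 2 → ℤ, (∀ i, a i ≤ b i) ∧ S = Set.Icc a b

/-- `C_S ⊆ ℝ²`: the union over `x ∈ S` of the unit squares centered at `x`. -/
def CubeSet (S : Set (Fin 2 → ℤ)) : Set (Fin 2 → ℝ) :=
  {y | ∃ x ∈ S, ∀ i, |y i - (x i : ℝ)| ≤ 1 / 2}

namespace Stmt19Aux
open TopologicalSpace

def vec (a b : ℤ) : Fin 2 → ℤ := ![a, b]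
@[simp] lemma vec_0 (a b : ℤ) : vec a b 0 = a := rfl
@[simp] lemma vec_1 (a b : ℤ) : vec a b 1 = b := rfl
@[simp] lemma vec_add (a b c d : ℤ) : vec a b + vec c d = vec (a+c) (b+d) := by
  funext i; fin_cases i <;> simp [vec]
@[simp] lemma vec_zero : vec 0 0 = 0 := by
  funext i; fin_cases i <;> simp [vec]
lemma vec_eta (g : Fin 2 → ℤ) : vec (g 0) (g 1) = g := by
  funext i; fin_cases i <;> simp [vec]
@[simp] lemma vec_neg (a b : ℤ) : -vec a b = vec (-a) (-b) := by
  funext i; fin_cases i <;> simp [vec]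


variable {X : Type} [TopologicalSpace X] [PolishSpace X] [MeasurableSpace X] [BorelSpace X]
variable {act : (Fin 2 → ℤ) → X → X}

section coloring
variable (hzero : ∀ x, act 0 x = x) (hadd : ∀ g h x, act (g + h) x = act g (act h x))
  (hBorel : ∀ g, Measurable (act g))
  (hfree : ∀ (x : X) (g : Fin 2 → ℤ), g ≠ 0 → act g x ≠ x)

include hzero hBorel hfree in
lemma color_exists (V : Finset (Fin 2 → ℤ)) (hV : (0 : Fin 2 → ℤ) ∉ V) :
    ∃ γ : X → ℕ, Measurable γ ∧ ∀ x, ∀ v ∈ V, γ (act v x) ≠ γ x := by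
  letI := upgradeIsCompletelyMetrizable X
  obtain ⟨b, hbc, hbne, hbasis⟩ := exists_countable_basis X
  obtain ⟨f, hf⟩ : ∃ f : ℕ → Set X, insert ∅ b = Set.range f :=
    (hbc.insert ∅).exists_eq_range ⟨∅, Set.mem_insert _ _⟩
  have hfopen : ∀ n, IsOpen (f n) := by
    intro n
    have : f n ∈ insert ∅ b := hf ▸ Set.mem_range_self n
    rcases this with h | h
    · rw [h]; exact isOpen_empty
    · exact hbasis.isOpen h
  have hex : ∀ x : X, ∃ n, x ∈ f n ∧ ∀ v ∈ V, act v x ∉ f n := by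
    intro x
    have hFfin : (Set.Finite ((fun v => act v x) '' (V : Set (Fin 2 → ℤ)))) :=
      (V.finite_toSet.image _)
    have hxF : x ∉ ((fun v => act v x) '' (V : Set (Fin 2 → ℤ))) := by
      rintro ⟨v, hv, hvx⟩
      exact hfree x v (fun h => hV (h ▸ hv)) hvx
    have hopen : IsOpen ((fun v => act v x) '' (V : Set (Fin 2 → ℤ)))ᶜ :=
      (hFfin.isClosed).isOpen_compl
    obtain ⟨u, hub, hxu, hsub⟩ := hbasis.exists_subset_of_mem_open (by exact hxF) hopen
    have : u ∈ insert ∅ b := Set.mem_insert_of_mem _ hub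
    rw [hf] at this
    obtain ⟨n, rfl⟩ := this
    refine ⟨n, hxu, fun v hv hmem => ?_⟩
    exact (hsub hmem) ⟨v, hv, rfl⟩
  classical
  refine ⟨fun x => Nat.find (hex x), ?_, ?_⟩
  · apply measurable_to_countable'
    intro n
    have : (fun x => Nat.find (hex x)) ⁻¹' {n} =
        {x | (x ∈ f n ∧ ∀ v ∈ V, act v x ∉ f n) ∧
          ∀ m < n, ¬(x ∈ f m ∧ ∀ v ∈ V, act v x ∉ f m)} := by
      ext x; simp [Nat.find_eq_iff]
    rw [this]
    have hA : ∀ m, MeasurableSet {x : X | x ∈ f m ∧ ∀ v ∈ V, act v x ∉ f m} := by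
      intro m
      have : {x : X | x ∈ f m ∧ ∀ v ∈ V, act v x ∉ f m} =
          (f m) ∩ ⋂ v ∈ V, (act v) ⁻¹' (f m)ᶜ := by
        ext x; simp
      rw [this]
      exact ((hfopen m).measurableSet).inter
        (MeasurableSet.biInter (V.countable_toSet) fun v _ =>
          (hBorel v) ((hfopen m).measurableSet.compl))
    have : {x | (x ∈ f n ∧ ∀ v ∈ V, act v x ∉ f n) ∧
          ∀ m < n, ¬(x ∈ f m ∧ ∀ v ∈ V, act v x ∉ f m)} =
        {x : X | x ∈ f n ∧ ∀ v ∈ V, act v x ∉ f n} ∩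
          ⋂ m ∈ Finset.range n, {x : X | x ∈ f m ∧ ∀ v ∈ V, act v x ∉ f m}ᶜ := by
      ext x; simp
    rw [this]
    exact (hA n).inter (MeasurableSet.biInter (Finset.range n).countable_toSet
      fun m _ => (hA m).compl)
  · intro x v hv hEq
    have h1 := Nat.find_spec (hex x)
    have h2 := Nat.find_spec (hex (act v x))
    simp only at hEq
    rw [hEq] at h2
    exact (h1.2 v hv) h2.1

include hzero hadd hBorel hfree in
lemma marker_exists (V : Finset (Fin 2 → ℤ)) (hV : (0 : Fin 2 → ℤ) ∉ V)
    (hVsym : ∀ v ∈ V, -v ∈ V) :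
    ∃ M : Set X, MeasurableSet M ∧ (∀ x ∈ M, ∀ v ∈ V, act v x ∉ M) ∧
      (∀ x : X, x ∈ M ∨ ∃ v ∈ V, act v x ∈ M) := by
  classical
  obtain ⟨γ, hγm, hγ⟩ := color_exists hzero hBorel hfree V hV
  let U : ℕ → Set X := fun n =>
    Nat.rec ∅ (fun m Um => Um ∪ {x | γ x = m ∧ ∀ v ∈ V, act v x ∉ Um}) n
  have hU0 : U 0 = ∅ := rfl
  have hUsucc : ∀ n, U (n+1) = U n ∪ {x | γ x = n ∧ ∀ v ∈ V, act v x ∉ U n} := fun n => rfl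
  have hUmono : ∀ {m n}, m ≤ n → U m ⊆ U n := by
    intro m n h
    induction n with
    | zero => simpa [Nat.le_zero.mp h] using Set.Subset.rfl
    | succ k ih =>
      rcases Nat.lt_or_ge m (k+1) with h' | h'
      · exact (ih (Nat.lt_succ_iff.mp h')).trans (by rw [hUsucc]; exact Set.subset_union_left)
      · have : m = k + 1 := le_antisymm h h'
        rw [this]
  set M : Set X := ⋃ n, {x | γ x = n ∧ ∀ v ∈ V, act v x ∉ U n} with hM
  have hnewM : ∀ n, {x | γ x = n ∧ ∀ v ∈ V, act v x ∉ U n} ⊆ M :=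
    fun n => Set.subset_iUnion (fun n => {x | γ x = n ∧ ∀ v ∈ V, act v x ∉ U n}) n
  have hMU : ∀ x, x ∈ M → x ∈ U (γ x + 1) := by
    rintro x hx
    obtain ⟨n, hn⟩ := Set.mem_iUnion.mp hx
    have hgx : γ x = n := hn.1
    rw [hUsucc, hgx]
    exact Set.mem_union_right _ (hgx ▸ hn)
  have hUM : ∀ n x, x ∈ U n → x ∈ M := by
    intro n
    induction n with
    | zero => intro x hx; simp [hU0] at hx
    | succ k ih =>
      intro x hx
      rw [hUsucc] at hx
      rcases hx with hx | hx
      · exact ih x hx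
      · exact hnewM k hx
  have hUiff : ∀ n x, x ∈ U (n+1) ↔ (x ∈ M ∧ γ x ≤ n) := by
    intro n x
    constructor
    · intro hx
      refine ⟨hUM (n+1) x hx, ?_⟩
      -- γ x ≤ n : induction
      induction n with
      | zero =>
        rw [hUsucc, hU0] at hx
        rcases hx with hx | hx
        · simp at hx
        · simp [hx.1]
      | succ k ih =>
        rw [hUsucc (k+1)] at hx
        rcases hx with hx | hx
        · exact (ih hx).trans (Nat.le_succ k)
        · simp [hx.1]
    · rintro ⟨hxM, hγx⟩
      exact hUmono (Nat.succ_le_succ hγx) (hMU x hxM)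
  refine ⟨M, ?_, ?_, ?_⟩
  · -- measurability
    have hUmeas : ∀ n, MeasurableSet (U n) ∧
        MeasurableSet {x | γ x = n ∧ ∀ v ∈ V, act v x ∉ U n} := by
      intro n
      induction n with
      | zero =>
        constructor
        · rw [hU0]; exact MeasurableSet.empty
        · have : {x | γ x = 0 ∧ ∀ v ∈ V, act v x ∉ U 0} = γ ⁻¹' {0} := by
            ext x; simp [hU0]
          rw [this]; exact hγm (measurableSet_singleton 0)
      | succ k ih =>
        have hUk1 : MeasurableSet (U (k+1)) := by
          rw [hUsucc]; exact ih.1.union ih.2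
        refine ⟨hUk1, ?_⟩
        have : {x | γ x = k+1 ∧ ∀ v ∈ V, act v x ∉ U (k+1)} =
            (γ ⁻¹' {k+1}) ∩ ⋂ v ∈ V, (act v) ⁻¹' (U (k+1))ᶜ := by
          ext x; simp
        rw [this]
        exact (hγm (measurableSet_singleton _)).inter
          (MeasurableSet.biInter V.countable_toSet fun v _ => (hBorel v) hUk1.compl)
    exact MeasurableSet.iUnion fun n => (hUmeas n).2
  · -- independence
    intro x hx v hv hvx
    obtain ⟨n, hn1, hn2⟩ : ∃ n, γ x = n ∧ ∀ w ∈ V, act w x ∉ U n := by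
      obtain ⟨n, hn⟩ := Set.mem_iUnion.mp hx; exact ⟨n, hn.1, hn.2⟩
    obtain ⟨m, hm1, hm2⟩ : ∃ m, γ (act v x) = m ∧ ∀ w ∈ V, act w (act v x) ∉ U m := by
      obtain ⟨m, hm⟩ := Set.mem_iUnion.mp hvx; exact ⟨m, hm.1, hm.2⟩
    rcases lt_trichotomy n m with h | h | h
    · -- act v x selected later; its neighbor -v gives back x ∈ U m
      have hxU : x ∈ U m := hUmono (Nat.succ_le_of_lt (hn1 ▸ h)) (hMU x hx)
      have : act (-v) (act v x) = x := by
        rw [← hadd, neg_add_cancel, hzero]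
      exact hm2 (-v) (hVsym v hv) (by rw [this]; exact hxU)
    · exact hγ x v hv (by rw [hn1, hm1, h])
    · have hvxU : act v x ∈ U n := hUmono (Nat.succ_le_of_lt (hm1 ▸ h)) (hMU _ hvx)
      exact hn2 v hv hvxU
  · -- maximality
    intro x
    rcases Classical.em (∀ v ∈ V, act v x ∉ U (γ x)) with hsel | hsel
    · exact Or.inl (hnewM (γ x) ⟨rfl, hsel⟩)
    · push_neg at hsel
      obtain ⟨v, hv, hvx⟩ := hsel
      exact Or.inr ⟨v, hv, hUM _ _ hvx⟩

end coloring

section defs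
variable {X : Type} (act : (Fin 2 → ℤ) → X → X) (M : Set X) (γ : X → ℕ)

def upp (t : ℤ) (x : X) : X := act (vec t 1) x
def dnn (t : ℤ) (x : X) : X := act (vec (-t) (-1)) x

def Forb (n : ℕ) (f : X → ℕ) (x : X) (w : ℤ) : Prop :=
  (∃ t : ℤ, |t| ≤ 2 ∧ upp act t x ∈ M ∧ γ (upp act t x) < n ∧ w = (f (upp act t x) : ℤ) + t) ∨
  (∃ t : ℤ, |t| ≤ 2 ∧ dnn act t x ∈ M ∧ γ (dnn act t x) < n ∧ w = (f (dnn act t x) : ℤ) - t)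

open Classical in
noncomputable def pick (n : ℕ) (f : X → ℕ) (x : X) : ℕ :=
  if ¬ Forb act M γ n f x 0 then 0 else if ¬ Forb act M γ n f x 1 then 1 else 2

noncomputable def col : ℕ → X → ℕ
  | 0 => fun _ => 0
  | (n+1) => fun x => open Classical in
      if γ x = n ∧ x ∈ M then pick act M γ n (col n) x else col n x

lemma col_succ (n : ℕ) (x : X) : col act M γ (n+1) x =
    open Classical in
    if γ x = n ∧ x ∈ M then pick act M γ n (col act M γ n) x else col act M γ n x := rfl

lemma pick_le (n : ℕ) (f : X → ℕ) (x : X) : pick act M γ n f x ≤ 2 := by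
  unfold pick; split <;> [omega; skip]; split <;> omega

lemma col_le (n : ℕ) (x : X) : col act M γ n x ≤ 2 := by
  induction n generalizing x with
  | zero => simp [col]
  | succ k ih =>
    rw [col_succ]
    split
    · exact pick_le act M γ k _ x
    · exact ih x

lemma col_stable (n : ℕ) (x : X) (h : γ x < n) : col act M γ n x = col act M γ (γ x + 1) x := by
  induction n with
  | zero => omega
  | succ k ih =>
    rcases Nat.lt_or_ge (γ x) k with h' | h'
    · rw [col_succ]
      have : ¬ (γ x = k ∧ x ∈ M) := by intro hc; omega
      rw [if_neg this]
      exact ih h'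
    · have : γ x = k := by omega
      rw [this]

end defs

section machine
variable (act : (Fin 2 → ℤ) → X → X) (M : Set X) (γ : X → ℕ)

lemma pick_avoid
    (hadd : ∀ g h x, act (g + h) x = act g (act h x))
    (hindep : ∀ y ∈ M, ∀ d : ℤ, d ≠ 0 → |d| ≤ 4 → act (vec d 0) y ∉ M)
    (n : ℕ) (f : X → ℕ) (x : X) :
    ¬ Forb act M γ n f x (pick act M γ n f x) := by
  classical
  have hup : ∀ w w' : ℤ,
      (∃ t : ℤ, |t| ≤ 2 ∧ upp act t x ∈ M ∧ γ (upp act t x) < n ∧ w = (f (upp act t x) : ℤ) + t) →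
      (∃ t : ℤ, |t| ≤ 2 ∧ upp act t x ∈ M ∧ γ (upp act t x) < n ∧ w' = (f (upp act t x) : ℤ) + t) →
      w = w' := by
    rintro w w' ⟨t, ht, htM, htn, rfl⟩ ⟨t', ht', htM', htn', rfl⟩
    rcases eq_or_ne t t' with rfl | hne
    · rfl
    · exfalso
      have hcomp : upp act t' x = act (vec (t' - t) 0) (upp act t x) := by
        unfold upp; rw [← hadd, vec_add]; ring_nf
      rw [abs_le] at ht ht'
      refine hindep _ htM (t' - t) (sub_ne_zero.mpr (Ne.symm hne))
        (abs_le.mpr ⟨by omega, by omega⟩) ?_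
      rw [← hcomp]; exact htM'
  have hdn : ∀ w w' : ℤ,
      (∃ t : ℤ, |t| ≤ 2 ∧ dnn act t x ∈ M ∧ γ (dnn act t x) < n ∧ w = (f (dnn act t x) : ℤ) - t) →
      (∃ t : ℤ, |t| ≤ 2 ∧ dnn act t x ∈ M ∧ γ (dnn act t x) < n ∧ w' = (f (dnn act t x) : ℤ) - t) →
      w = w' := by
    rintro w w' ⟨t, ht, htM, htn, rfl⟩ ⟨t', ht', htM', htn', rfl⟩
    rcases eq_or_ne t t' with rfl | hne
    · rfl
    · exfalso
      have hcomp : dnn act t' x = act (vec (t - t') 0) (dnn act t x) := by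
        unfold dnn; rw [← hadd, vec_add]; ring_nf
      rw [abs_le] at ht ht'
      refine hindep _ htM (t - t') (sub_ne_zero.mpr hne)
        (abs_le.mpr ⟨by omega, by omega⟩) ?_
      rw [← hcomp]; exact htM'
  have key : ¬ (Forb act M γ n f x 0 ∧ Forb act M γ n f x 1 ∧ Forb act M γ n f x 2) := by
    rintro ⟨h0, h1, h2⟩
    rcases h0 with h0 | h0 <;> rcases h1 with h1 | h1 <;> rcases h2 with h2 | h2
    · exact absurd (hup 0 1 h0 h1) (by norm_num)
    · exact absurd (hup 0 1 h0 h1) (by norm_num)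
    · exact absurd (hup 0 2 h0 h2) (by norm_num)
    · exact absurd (hdn 1 2 h1 h2) (by norm_num)
    · exact absurd (hup 1 2 h1 h2) (by norm_num)
    · exact absurd (hdn 0 2 h0 h2) (by norm_num)
    · exact absurd (hdn 0 1 h0 h1) (by norm_num)
    · exact absurd (hdn 0 1 h0 h1) (by norm_num)
  unfold pick
  by_cases hF0 : Forb act M γ n f x 0
  · rw [if_neg (not_not_intro hF0)]
    by_cases hF1 : Forb act M γ n f x 1
    · rw [if_neg (not_not_intro hF1)]
      intro hF2; exact key ⟨hF0, hF1, hF2⟩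
    · rw [if_pos hF1]; exact hF1
  · rw [if_pos hF0]; exact hF0

lemma forb_meas (hBorel : ∀ g, Measurable (act g)) (hMmeas : MeasurableSet M)
    (hγ : Measurable γ) (n : ℕ) (f : X → ℕ) (hf : Measurable f) (w : ℤ) :
    MeasurableSet {x | Forb act M γ n f x w} := by
  have habs : ∀ t : ℤ, |t| ≤ 2 ↔ t ∈ Finset.Icc (-2 : ℤ) 2 := by
    intro t; rw [Finset.mem_Icc, abs_le]
  have h1 : {x | Forb act M γ n f x w} =
      (⋃ t ∈ Finset.Icc (-2 : ℤ) 2, (act (vec t 1)) ⁻¹'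
        (M ∩ γ ⁻¹' {m | m < n} ∩ f ⁻¹' {m | w = (m : ℤ) + t})) ∪
      (⋃ t ∈ Finset.Icc (-2 : ℤ) 2, (act (vec (-t) (-1))) ⁻¹'
        (M ∩ γ ⁻¹' {m | m < n} ∩ f ⁻¹' {m | w = (m : ℤ) - t})) := by
    ext x
    simp only [Forb, Set.mem_setOf_eq, Set.mem_union, Set.mem_iUnion, Set.mem_preimage,
      Set.mem_inter_iff, Set.mem_setOf_eq, upp, dnn]
    constructor
    · rintro (⟨t, ht, h1, h2, h3⟩ | ⟨t, ht, h1, h2, h3⟩)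
      · exact Or.inl ⟨t, (habs t).mp ht, ⟨h1, h2⟩, h3⟩
      · exact Or.inr ⟨t, (habs t).mp ht, ⟨h1, h2⟩, h3⟩
    · rintro (⟨t, ht, ⟨h1, h2⟩, h3⟩ | ⟨t, ht, ⟨h1, h2⟩, h3⟩)
      · exact Or.inl ⟨t, (habs t).mpr ht, h1, h2, h3⟩
      · exact Or.inr ⟨t, (habs t).mpr ht, h1, h2, h3⟩
  rw [h1]
  have hsub : ∀ (v : Fin 2 → ℤ) (S : Set ℕ) (S' : Set ℕ),
      MeasurableSet ((act v) ⁻¹' (M ∩ γ ⁻¹' S ∩ f ⁻¹' S')) := by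
    intro v S S'
    exact (hBorel v) ((hMmeas.inter (hγ (S.to_countable.measurableSet))).inter
      (hf (S'.to_countable.measurableSet)))
  exact (MeasurableSet.biUnion (Finset.Icc (-2:ℤ) 2).countable_toSet fun t _ => hsub _ _ _).union
    (MeasurableSet.biUnion (Finset.Icc (-2:ℤ) 2).countable_toSet fun t _ => hsub _ _ _)

lemma pick_meas (hBorel : ∀ g, Measurable (act g)) (hMmeas : MeasurableSet M)
    (hγ : Measurable γ) (n : ℕ) (f : X → ℕ) (hf : Measurable f) :
    Measurable (pick act M γ n f) := by
  classical
  apply measurable_to_countable'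
  intro v
  have hF0 := forb_meas act M γ hBorel hMmeas hγ n f hf 0
  have hF1 := forb_meas act M γ hBorel hMmeas hγ n f hf 1
  match v with
  | 0 =>
    have : pick act M γ n f ⁻¹' {0} = {x | ¬ Forb act M γ n f x 0} := by
      ext x
      by_cases h0 : Forb act M γ n f x 0 <;> by_cases h1 : Forb act M γ n f x 1 <;>
        simp [pick, h0, h1]
    rw [this]; exact hF0.compl
  | 1 =>
    have : pick act M γ n f ⁻¹' {1} =
        {x | Forb act M γ n f x 0} ∩ {x | ¬ Forb act M γ n f x 1} := by
      ext x
      by_cases h0 : Forb act M γ n f x 0 <;> by_cases h1 : Forb act M γ n f x 1 <;>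
        simp [pick, h0, h1]
    rw [this]; exact hF0.inter hF1.compl
  | 2 =>
    have : pick act M γ n f ⁻¹' {2} =
        {x | Forb act M γ n f x 0} ∩ {x | Forb act M γ n f x 1} := by
      ext x
      by_cases h0 : Forb act M γ n f x 0 <;> by_cases h1 : Forb act M γ n f x 1 <;>
        simp [pick, h0, h1]
    rw [this]; exact hF0.inter hF1
  | (w+3) =>
    have : pick act M γ n f ⁻¹' {w+3} = ∅ := by
      ext x
      simp only [Set.mem_preimage, Set.mem_singleton_iff, Set.mem_empty_iff_false, iff_false]
      have := pick_le act M γ n f x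
      omega
    rw [this]; exact MeasurableSet.empty

lemma col_meas (hBorel : ∀ g, Measurable (act g)) (hMmeas : MeasurableSet M)
    (hγ : Measurable γ) (n : ℕ) : Measurable (col act M γ n) := by
  classical
  induction n with
  | zero => exact measurable_const
  | succ k ih =>
    apply measurable_to_countable'
    intro v
    have hcond : MeasurableSet {x | γ x = k ∧ x ∈ M} := by
      have : {x | γ x = k ∧ x ∈ M} = γ ⁻¹' {k} ∩ M := by ext x; simp [and_comm]
      rw [this]; exact (hγ (measurableSet_singleton k)).inter hMmeas
    have hpre : col act M γ (k+1) ⁻¹' {v} =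
        ({x | γ x = k ∧ x ∈ M} ∩ (pick act M γ k (col act M γ k)) ⁻¹' {v}) ∪
        ({x | γ x = k ∧ x ∈ M}ᶜ ∩ (col act M γ k) ⁻¹' {v}) := by
      ext x
      by_cases h : γ x = k ∧ x ∈ M <;>
        simp [col_succ, h]
    rw [hpre]
    exact (hcond.inter ((pick_meas act M γ hBorel hMmeas hγ k _ ih) (measurableSet_singleton v))).union
      (hcond.compl.inter (ih (measurableSet_singleton v)))

end machine

lemma c2_exists
    (hzero : ∀ x, act 0 x = x) (hadd : ∀ g h x, act (g + h) x = act g (act h x))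
    (hBorel : ∀ g, Measurable (act g))
    (hfree : ∀ (x : X) (g : Fin 2 → ℤ), g ≠ 0 → act g x ≠ x)
    (M : Set X) (hMmeas : MeasurableSet M)
    (hindep : ∀ y ∈ M, ∀ d : ℤ, d ≠ 0 → |d| ≤ 4 → act (vec d 0) y ∉ M) :
    ∃ c : X → ℕ, Measurable c ∧ (∀ x, c x ≤ 2) ∧
      ∀ (x : X) (t : ℤ), x ∈ M → |t| ≤ 2 → act (vec t 1) x ∈ M →
        (c x : ℤ) - (c (act (vec t 1) x) : ℤ) ≠ t := by
  classical
  set V₂ : Finset (Fin 2 → ℤ) :=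
    (Finset.Icc (-2:ℤ) 2).image (fun t => vec t 1) ∪
    (Finset.Icc (-2:ℤ) 2).image (fun t => vec t (-1)) with hV₂
  have h0V : (0 : Fin 2 → ℤ) ∉ V₂ := by
    intro h
    rw [hV₂, Finset.mem_union] at h
    rcases h with h | h <;>
    · rw [Finset.mem_image] at h
      obtain ⟨t, _, ht⟩ := h
      have := congrFun ht 1
      simp [vec] at this
  obtain ⟨γ, hγm, hγ⟩ := color_exists hzero hBorel hfree V₂ h0V
  set c : X → ℕ := fun x => col act M γ (γ x + 1) x with hc
  have hcm : Measurable c := by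
    apply measurable_to_countable'
    intro v
    have : c ⁻¹' {v} = ⋃ n, (γ ⁻¹' {n}) ∩ (col act M γ (n+1) ⁻¹' {v}) := by
      ext x
      simp only [Set.mem_preimage, Set.mem_singleton_iff, Set.mem_iUnion, Set.mem_inter_iff, hc]
      constructor
      · intro h; exact ⟨γ x, rfl, h⟩
      · rintro ⟨n, rfl, h⟩; exact h
    rw [this]
    exact MeasurableSet.iUnion fun n => (hγm (measurableSet_singleton n)).inter
      ((col_meas act M γ hBorel hMmeas hγm (n+1)) (measurableSet_singleton v))
  refine ⟨c, hcm, fun x => col_le act M γ _ x, ?_⟩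
  intro x t hxM ht hzM heq
  set z := act (vec t 1) x with hz
  have hzup : z = upp act t x := rfl
  have hmemV : vec t 1 ∈ V₂ := by
    rw [hV₂, Finset.mem_union]
    exact Or.inl (Finset.mem_image.mpr ⟨t, Finset.mem_Icc.mpr (abs_le.mp ht), rfl⟩)
  have hγne : γ z ≠ γ x := hγ x (vec t 1) hmemV
  rcases lt_or_gt_of_ne hγne with hlt | hgt
  · -- γ z < γ x
    have hcx : c x = pick act M γ (γ x) (col act M γ (γ x)) x := by
      show col act M γ (γ x + 1) x = _
      rw [col_succ, if_pos ⟨rfl, hxM⟩]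
    have havoid := pick_avoid act M γ hadd hindep (γ x) (col act M γ (γ x)) x
    rw [← hcx] at havoid
    apply havoid
    left
    refine ⟨t, ht, hzM, hlt, ?_⟩
    have hstab : col act M γ (γ x) z = c z := by
      rw [hc]; exact col_stable act M γ (γ x) z hlt
    rw [← hzup, hstab]
    omega
  · -- γ x < γ z
    have hczM : c z = pick act M γ (γ z) (col act M γ (γ z)) z := by
      show col act M γ (γ z + 1) z = _
      rw [col_succ, if_pos ⟨rfl, hzM⟩]
    have havoid := pick_avoid act M γ hadd hindep (γ z) (col act M γ (γ z)) z
    rw [← hczM] at havoid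
    apply havoid
    right
    have hdz : dnn act t z = x := by
      unfold dnn
      rw [hz, ← hadd, vec_add]
      norm_num
      exact hzero x
    refine ⟨t, ht, ?_, ?_, ?_⟩ <;> rw [hdz]
    · exact hxM
    · exact hgt
    · have hstab : col act M γ (γ z) x = c x := by
        rw [hc]; exact col_stable act M γ (γ z) x hgt
      rw [hstab]
      omega

lemma B_exists
    (hzero : ∀ x, act 0 x = x) (hadd : ∀ g h x, act (g + h) x = act g (act h x))
    (hBorel : ∀ g, Measurable (act g))
    (hfree : ∀ (x : X) (g : Fin 2 → ℤ), g ≠ 0 → act g x ≠ x) :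
    ∃ B : Set X, MeasurableSet B ∧
      (∀ y ∈ B, act (vec 0 1) y ∉ B) ∧
      (∀ (x : X) (K : ℤ), ∃ k : ℤ, K ≤ k ∧ act (vec k 0) x ∈ B) ∧
      (∀ (x : X) (K : ℤ), ∃ k : ℤ, k ≤ K ∧ act (vec k 0) x ∈ B) := by
  classical
  set V₁ : Finset (Fin 2 → ℤ) :=
    ((Finset.Icc (-4:ℤ) 4).erase 0).image (fun k => vec k 0) with hV₁
  have hmemV₁ : ∀ v, v ∈ V₁ ↔ ∃ d : ℤ, d ≠ 0 ∧ |d| ≤ 4 ∧ v = vec d 0 := by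
    intro v
    rw [hV₁, Finset.mem_image]
    constructor
    · rintro ⟨d, hd, rfl⟩
      rw [Finset.mem_erase, Finset.mem_Icc] at hd
      exact ⟨d, hd.1, abs_le.mpr hd.2, rfl⟩
    · rintro ⟨d, hd0, hd4, rfl⟩
      exact ⟨d, Finset.mem_erase.mpr ⟨hd0, Finset.mem_Icc.mpr (abs_le.mp hd4)⟩, rfl⟩
  have h0V : (0 : Fin 2 → ℤ) ∉ V₁ := by
    rw [hmemV₁]
    rintro ⟨d, hd0, _, hd⟩
    exact hd0 (by simpa using (congrFun hd.symm 0))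
  have hVsym : ∀ v ∈ V₁, -v ∈ V₁ := by
    intro v hv
    rw [hmemV₁] at hv ⊢
    obtain ⟨d, hd0, hd4, rfl⟩ := hv
    exact ⟨-d, neg_ne_zero.mpr hd0, by simpa using hd4, by simp⟩
  obtain ⟨M, hMmeas, hMindep, hMcover⟩ := marker_exists hzero hadd hBorel hfree V₁ h0V hVsym
  have hindep : ∀ y ∈ M, ∀ d : ℤ, d ≠ 0 → |d| ≤ 4 → act (vec d 0) y ∉ M := by
    intro y hy d hd0 hd4
    exact hMindep y hy _ ((hmemV₁ _).mpr ⟨d, hd0, hd4, rfl⟩)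
  have hcover : ∀ x : X, ∃ d : ℤ, |d| ≤ 4 ∧ act (vec d 0) x ∈ M := by
    intro x
    rcases hMcover x with hx | ⟨v, hv, hvx⟩
    · refine ⟨0, by norm_num, ?_⟩
      rw [vec_zero, hzero]; exact hx
    · obtain ⟨d, _, hd4, rfl⟩ := (hmemV₁ v).mp hv
      exact ⟨d, hd4, hvx⟩
  obtain ⟨c, hcm, hcle, hcprop⟩ := c2_exists hzero hadd hBorel hfree M hMmeas hindep
  set B : Set X := {y | ∃ j : ℕ, j ≤ 2 ∧ act (vec (-(j:ℤ)) 0) y ∈ M ∧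
    c (act (vec (-(j:ℤ)) 0) y) = j} with hB
  have hBmeas : MeasurableSet B := by
    have : B = ⋃ j ∈ Finset.range 3,
        (act (vec (-(j:ℤ)) 0)) ⁻¹' (M ∩ c ⁻¹' {j}) := by
      ext y
      simp only [hB, Set.mem_setOf_eq, Set.mem_iUnion, Set.mem_preimage, Set.mem_inter_iff,
        Set.mem_singleton_iff, Finset.mem_range]
      constructor
      · rintro ⟨j, hj, h1, h2⟩; exact ⟨j, by omega, h1, h2⟩
      · rintro ⟨j, hj, h1, h2⟩; exact ⟨j, by omega, h1, h2⟩
    rw [this]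
    exact MeasurableSet.biUnion (Finset.range 3).countable_toSet
      fun j _ => (hBorel _) (hMmeas.inter (hcm (measurableSet_singleton j)))
  have hBmem : ∀ x ∈ M, act (vec (c x : ℤ) 0) x ∈ B := by
    intro x hx
    refine ⟨c x, hcle x, ?_⟩
    have : act (vec (-(c x:ℤ)) 0) (act (vec (c x:ℤ) 0) x) = x := by
      rw [← hadd, vec_add]
      norm_num
      exact hzero x
    rw [this]
    exact ⟨hx, rfl⟩
  refine ⟨B, hBmeas, ?_, ?_, ?_⟩
  · -- vertical
    rintro y ⟨j, hj2, hxM, hcx⟩ ⟨j', hj2', hzM, hcz⟩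
    set x := act (vec (-(j:ℤ)) 0) y with hx
    set z := act (vec (-(j':ℤ)) 0) (act (vec 0 1) y) with hzdef
    have hyx : y = act (vec (j:ℤ) 0) x := by
      rw [hx, ← hadd, vec_add]
      norm_num
      exact (hzero y).symm
    have hzx : z = act (vec ((j:ℤ) - j') 1) x := by
      rw [hzdef, hyx, ← hadd, ← hadd, vec_add, vec_add]
      ring_nf
    have ht : |(j:ℤ) - j'| ≤ 2 := abs_le.mpr ⟨by omega, by omega⟩
    have := hcprop x ((j:ℤ) - j') hxM ht (by rw [← hzx]; exact hzM)
    rw [← hzx] at this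
    apply this
    rw [hcx, hcz]
  · -- cofinal up
    intro x K
    obtain ⟨d, hd4, hdM⟩ := hcover (act (vec (K+4) 0) x)
    rw [← hadd, vec_add] at hdM
    set m := d + (K + 4) with hm
    set y := act (vec m 0) x with hy
    refine ⟨m + (c y : ℤ), ?_, ?_⟩
    · rw [abs_le] at hd4
      have := hcle y
      omega
    · have := hBmem y hdM
      rw [hy, ← hadd, vec_add] at this
      norm_num at this ⊢
      convert this using 3
      ring
  · -- cofinal down
    intro x K
    obtain ⟨d, hd4, hdM⟩ := hcover (act (vec (K-6) 0) x)
    rw [← hadd, vec_add] at hdM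
    set m := d + (K - 6) with hm
    set y := act (vec m 0) x with hy
    refine ⟨m + (c y : ℤ), ?_, ?_⟩
    · rw [abs_le] at hd4
      have := hcle y
      omega
    · have := hBmem y hdM
      rw [hy, ← hadd, vec_add] at this
      norm_num at this ⊢
      convert this using 3
      ring

theorem main (X : Type) [TopologicalSpace X] [PolishSpace X]
    [MeasurableSpace X] [BorelSpace X]
    (act : (Fin 2 → ℤ) → X → X)
    (hzero : ∀ x, act 0 x = x)
    (hadd : ∀ g h x, act (g + h) x = act g (act h x))
    (hBorel : ∀ g, Measurable (act g))
    (hfree : ∀ (x : X) (g : Fin 2 → ℤ), g ≠ 0 → act g x ≠ x) :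
    ∃ P : Set (Set X),
      (∀ Q ∈ P, ∃ (x : X) (S : Set (Fin 2 → ℤ)),
          IsZRect S ∧ Q = (fun g => act g x) '' S) ∧
      (⋃₀ P = Set.univ) ∧
      (∀ Q₁ ∈ P, ∀ Q₂ ∈ P, Q₁ ≠ Q₂ → Q₁ ∩ Q₂ = ∅) ∧
      (∀ g : Fin 2 → ℤ, MeasurableSet {x : X | ∃ Q ∈ P, x ∈ Q ∧ act g x ∈ Q}) ∧
      (∀ (x : X) (y : Fin 2 → ℝ) (T : Finset (Set (Fin 2 → ℤ))),
        (∀ S ∈ T, ((fun g => act g x) '' S) ∈ P ∧ y ∈ CubeSet S) → T.card ≤ 3) := by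
  classical
  -- injectivity
  have hinj : ∀ {g h : Fin 2 → ℤ} {x : X}, act g x = act h x → g = h := by
    intro g h x he
    by_contra hne
    have h2 : act (-g + h) x = x := by
      rw [hadd, ← he, ← hadd, neg_add_cancel, hzero]
    refine hfree x (-g + h) (fun h0 => hne ?_) h2
    have : h = g + (-g + h) := by ring
    rw [this, h0, add_zero]
  have hcomp : ∀ (a b c d : ℤ) (x : X),
      act (vec a b) (act (vec c d) x) = act (vec (a+c) (b+d)) x := by
    intro a b c d x; rw [← hadd, vec_add]
  obtain ⟨B, hBmeas, hBvert, hBup, hBdown⟩ := B_exists hzero hadd hBorel hfree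
  -- R and L
  have hexR : ∀ x : X, ∃ k : ℕ, act (vec (k:ℤ) 0) x ∈ B := by
    intro x
    obtain ⟨k, hk, hkB⟩ := hBup x 0
    exact ⟨k.toNat, by rwa [Int.toNat_of_nonneg hk]⟩
  have hexL : ∀ x : X, ∃ k : ℕ, act (vec (-(k:ℤ)-1) 0) x ∈ B := by
    intro x
    obtain ⟨k, hk, hkB⟩ := hBdown x (-1)
    refine ⟨(-k-1).toNat, ?_⟩
    have h1 : ((-k-1).toNat : ℤ) = -k-1 := Int.toNat_of_nonneg (by omega)
    rw [h1]
    have : -(-k-1) - 1 = k := by ring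
    rwa [this]
  set R : X → ℕ := fun x => Nat.find (hexR x) with hRdef
  set L : X → ℕ := fun x => Nat.find (hexL x) with hLdef
  have hRB : ∀ x, act (vec (R x : ℤ) 0) x ∈ B := fun x => Nat.find_spec (hexR x)
  have hRmin : ∀ x (k : ℕ), k < R x → act (vec (k:ℤ) 0) x ∉ B := fun x k hk =>
    Nat.find_min (hexR x) hk
  have hLB : ∀ x, act (vec (-(L x:ℤ)-1) 0) x ∈ B := fun x => Nat.find_spec (hexL x)
  have hLmin : ∀ x (k : ℕ), k < L x → act (vec (-(k:ℤ)-1) 0) x ∉ B := fun x k hk =>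
    Nat.find_min (hexL x) hk
  have hclear : ∀ (x : X) (j : ℤ), -(L x:ℤ) ≤ j → j < (R x : ℤ) → act (vec j 0) x ∉ B := by
    intro x j h1 h2
    rcases le_or_gt 0 j with hj | hj
    · have : j = ((j.toNat : ℕ) : ℤ) := (Int.toNat_of_nonneg hj).symm
      rw [this]
      exact hRmin x j.toNat (by omega)
    · have hlt : (-j-1).toNat < L x := by omega
      have : j = -(((-j-1).toNat : ℕ) : ℤ) - 1 := by
        have : ((-j-1).toNat : ℤ) = -j-1 := Int.toNat_of_nonneg (by omega)
        omega
      rw [this]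
      exact hLmin x _ hlt
  -- pieces
  set piece : X → Set X := fun w =>
    (fun g => act g w) '' (Set.Icc (vec (-(L w : ℤ)) 0) (vec (R w : ℤ) 0)) with hpiece
  set P : Set (Set X) := {Q | ∃ w, Q = piece w} with hP
  -- Icc membership
  have hIcc : ∀ (a b : ℤ) (g : Fin 2 → ℤ),
      g ∈ Set.Icc (vec a 0) (vec b 0) ↔ (a ≤ g 0 ∧ g 0 ≤ b ∧ g 1 = 0) := by
    intro a b g
    rw [Set.mem_Icc]
    constructor
    · rintro ⟨h1, h2⟩
      have h10 := h1 0; have h11 := h1 1; have h20 := h2 0; have h21 := h2 1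
      simp only [vec_0, vec_1] at h10 h11 h20 h21
      exact ⟨h10, h20, le_antisymm h21 h11⟩
    · rintro ⟨h1, h2, h3⟩
      constructor <;> intro i <;> fin_cases i <;> simp [h1, h2, h3]
  have hmem : ∀ (w : X) (g : Fin 2 → ℤ),
      act g w ∈ piece w ↔ (-(L w : ℤ) ≤ g 0 ∧ g 0 ≤ (R w : ℤ) ∧ g 1 = 0) := by
    intro w g
    constructor
    · rintro ⟨g', hg', he⟩
      have : g' = g := hinj he
      rw [← this]
      exact (hIcc _ _ g').mp hg'
    · intro h
      exact ⟨g, (hIcc _ _ g).mpr h, rfl⟩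
  have hmem' : ∀ (w : X) (u : X), u ∈ piece w ↔
      ∃ j : ℤ, -(L w : ℤ) ≤ j ∧ j ≤ (R w : ℤ) ∧ u = act (vec j 0) w := by
    intro w u
    constructor
    · rintro ⟨g, hg, rfl⟩
      obtain ⟨h1, h2, h3⟩ := (hIcc _ _ g).mp hg
      refine ⟨g 0, h1, h2, ?_⟩
      rw [← h3, vec_eta]
    · rintro ⟨j, h1, h2, rfl⟩
      exact ⟨vec j 0, (hIcc _ _ _).mpr ⟨by simpa using h1, by simpa using h2, rfl⟩, rfl⟩
  -- shift lemma
  have hshift : ∀ (w : X) (j : ℤ), -(L w : ℤ) ≤ j → j ≤ (R w : ℤ) →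
      (R (act (vec j 0) w) : ℤ) = (R w : ℤ) - j ∧
      (L (act (vec j 0) w) : ℤ) = (L w : ℤ) + j := by
    intro w j h1 h2
    set u := act (vec j 0) w with hu
    have hk : ∀ k : ℤ, act (vec k 0) u = act (vec (k + j) 0) w := by
      intro k; rw [hu, hcomp]; norm_num
    have hBRn : act (vec (R w : ℤ) 0) w ∈ B := hRB w
    have hBLn : act (vec (-(L w : ℤ)-1) 0) w ∈ B := hLB w
    constructor
    · set r' : ℕ := ((R w : ℤ) - j).toNat with hr'def
      have hr' : (r' : ℤ) = (R w : ℤ) - j := Int.toNat_of_nonneg (by omega)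
      have : R u = r' := by
        rw [hRdef]
        rw [Nat.find_eq_iff]
        constructor
        · rw [hk]
          have : (r' : ℤ) + j = (R w : ℤ) := by omega
          rw [this]
          exact hBRn
        · intro k hklt
          rw [hk]
          have hklt' : (k : ℤ) < r' := by exact_mod_cast hklt
          apply hclear w ((k : ℤ) + j) (by omega) (by omega)
      omega
    · set l' : ℕ := ((L w : ℤ) + j).toNat with hl'def
      have hl' : (l' : ℤ) = (L w : ℤ) + j := Int.toNat_of_nonneg (by omega)
      have : L u = l' := by
        rw [hLdef]
        rw [Nat.find_eq_iff]
        constructor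
        · rw [hk]
          have : -(l' : ℤ) - 1 + j = -(L w : ℤ) - 1 := by omega
          rw [this]
          exact hBLn
        · intro k hklt
          rw [hk]
          have hklt' : (k : ℤ) < l' := by exact_mod_cast hklt
          apply hclear w (-(k:ℤ) - 1 + j) (by omega) (by omega)
      omega
  have hself : ∀ w : X, w ∈ piece w := by
    intro w
    rw [hmem' w w]
    exact ⟨0, by simp, by simp, by rw [vec_zero, hzero]⟩
  have hpeq : ∀ (w u : X), u ∈ piece w → piece u = piece w := by
    intro w u hu
    obtain ⟨j, h1, h2, rfl⟩ := (hmem' w u).mp hu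
    obtain ⟨hR', hL'⟩ := hshift w j h1 h2
    ext v
    rw [hmem', hmem']
    constructor
    · rintro ⟨i, hi1, hi2, rfl⟩
      refine ⟨i + j, by omega, by omega, ?_⟩
      rw [hcomp]; norm_num
    · rintro ⟨i, hi1, hi2, rfl⟩
      refine ⟨i - j, by omega, by omega, ?_⟩
      rw [hcomp]
      norm_num
  -- measurability of R and L
  have hRmeas : Measurable R := by
    apply measurable_to_countable'
    intro n
    have : R ⁻¹' {n} = (act (vec (n:ℤ) 0)) ⁻¹' B ∩
        ⋂ k ∈ Finset.range n, ((act (vec (k:ℤ) 0)) ⁻¹' B)ᶜ := by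
      ext x
      simp only [Set.mem_preimage, Set.mem_singleton_iff, Set.mem_inter_iff, Set.mem_iInter,
        Set.mem_compl_iff, Finset.mem_range, hRdef, Nat.find_eq_iff]
    rw [this]
    exact ((hBorel _) hBmeas).inter (MeasurableSet.biInter (Finset.range n).countable_toSet
      fun k _ => ((hBorel _) hBmeas).compl)
  have hLmeas : Measurable L := by
    apply measurable_to_countable'
    intro n
    have : L ⁻¹' {n} = (act (vec (-(n:ℤ)-1) 0)) ⁻¹' B ∩
        ⋂ k ∈ Finset.range n, ((act (vec (-(k:ℤ)-1) 0)) ⁻¹' B)ᶜ := by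
      ext x
      simp only [Set.mem_preimage, Set.mem_singleton_iff, Set.mem_inter_iff, Set.mem_iInter,
        Set.mem_compl_iff, Finset.mem_range, hLdef, Nat.find_eq_iff]
    rw [this]
    exact ((hBorel _) hBmeas).inter (MeasurableSet.biInter (Finset.range n).countable_toSet
      fun k _ => ((hBorel _) hBmeas).compl)
  refine ⟨P, ?_, ?_, ?_, ?_, ?_⟩
  · -- rectangles
    rintro Q ⟨w, rfl⟩
    refine ⟨w, Set.Icc (vec (-(L w : ℤ)) 0) (vec (R w : ℤ) 0), ?_, rfl⟩
    refine ⟨vec (-(L w : ℤ)) 0, vec (R w : ℤ) 0, ?_, rfl⟩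
    intro i; fin_cases i <;> simp <;> omega
  · -- cover
    ext x
    simp only [Set.mem_sUnion, Set.mem_univ, iff_true]
    exact ⟨piece x, ⟨x, rfl⟩, hself x⟩
  · -- disjoint
    rintro Q₁ ⟨w₁, rfl⟩ Q₂ ⟨w₂, rfl⟩ hne
    rw [Set.eq_empty_iff_forall_notMem]
    rintro u ⟨hu1, hu2⟩
    exact hne ((hpeq w₁ u hu1).symm.trans (hpeq w₂ u hu2))
  · -- measurability
    intro g
    have hD : {x : X | ∃ Q ∈ P, x ∈ Q ∧ act g x ∈ Q} =
        {x : X | -(L x : ℤ) ≤ g 0 ∧ g 0 ≤ (R x : ℤ) ∧ g 1 = 0} := by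
      ext x
      constructor
      · rintro ⟨Q, ⟨w, rfl⟩, hxQ, hgxQ⟩
        rw [← hpeq w x hxQ] at hgxQ
        exact (hmem x g).mp hgxQ
      · intro h
        exact ⟨piece x, ⟨x, rfl⟩, hself x, (hmem x g).mpr h⟩
    rw [hD]
    by_cases hg1 : g 1 = 0
    · have : {x : X | -(L x : ℤ) ≤ g 0 ∧ g 0 ≤ (R x : ℤ) ∧ g 1 = 0} =
          L ⁻¹' {a : ℕ | -(a : ℤ) ≤ g 0} ∩ R ⁻¹' {b : ℕ | g 0 ≤ (b : ℤ)} := by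
        ext x; simp [hg1]
      rw [this]
      exact (hLmeas ((Set.to_countable _).measurableSet)).inter
        (hRmeas ((Set.to_countable _).measurableSet))
    · have : {x : X | -(L x : ℤ) ≤ g 0 ∧ g 0 ≤ (R x : ℤ) ∧ g 1 = 0} = ∅ := by
        ext x; simp [hg1]
      rw [this]
      exact MeasurableSet.empty
  · -- regularity
    intro x y T hT
    -- preimage characterization
    have hSpre : ∀ S ∈ T, S = {g : Fin 2 → ℤ | act g x ∈ (fun g => act g x) '' S} := by
      intro S hS
      ext g
      constructor
      · intro hg; exact ⟨g, hg, rfl⟩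
      · rintro ⟨s, hs, he⟩
        have : s = g := hinj he
        rwa [← this]
    have hdisj : ∀ S ∈ T, ∀ S' ∈ T, S ≠ S' → ∀ g, g ∈ S → g ∉ S' := by
      intro S hS S' hS' hne g hg hg'
      have himS := (hT S hS).1
      have himS' := (hT S' hS').1
      rcases himS with ⟨w, hw⟩
      rcases himS' with ⟨w', hw'⟩
      have hgx : act g x ∈ piece w := by rw [← hw]; exact ⟨g, hg, rfl⟩
      have hgx' : act g x ∈ piece w' := by rw [← hw']; exact ⟨g, hg', rfl⟩
      have : piece w = piece w' := by
        rw [← hpeq w _ hgx, ← hpeq w' _ hgx']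
      apply hne
      rw [hSpre S hS, hSpre S' hS', hw, hw', this]
    -- the chosen cells
    set f : Set (Fin 2 → ℤ) → (Fin 2 → ℤ) :=
      fun S => if h : y ∈ CubeSet S then h.choose else 0 with hf
    have hfT : ∀ S ∈ T, f S ∈ S ∧ ∀ i, |y i - (f S i : ℝ)| ≤ 1/2 := by
      intro S hS
      have hy := (hT S hS).2
      rw [hf]
      simp only [dif_pos hy]
      exact ⟨hy.choose_spec.1, hy.choose_spec.2⟩
    -- the target finset
    set a : Fin 2 → ℤ := vec ⌈y 0 - 1/2⌉ ⌈y 1 - 1/2⌉ with ha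
    set b : Fin 2 → ℤ := vec ⌊y 0 + 1/2⌋ ⌊y 1 + 1/2⌋ with hb
    have hmapsto : ∀ S ∈ T, f S ∈ Finset.Icc a b := by
      intro S hS
      obtain ⟨_, hbound⟩ := hfT S hS
      rw [Finset.mem_Icc]
      constructor <;> intro i <;> fin_cases i <;>
        simp only [ha, hb, vec_0, vec_1]
      · exact Int.ceil_le.mpr (by have := abs_le.mp (hbound 0); push_cast; linarith)
      · exact Int.ceil_le.mpr (by have := abs_le.mp (hbound 1); push_cast; linarith)
      · exact Int.le_floor.mpr (by have := abs_le.mp (hbound 0); push_cast; linarith)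
      · exact Int.le_floor.mpr (by have := abs_le.mp (hbound 1); push_cast; linarith)
    have hinjOn : Set.InjOn f (T : Set (Set (Fin 2 → ℤ))) := by
      intro S hS S' hS' he
      by_contra hne
      exact hdisj S hS S' hS' hne (f S) (hfT S hS).1 (he ▸ (hfT S' hS').1)
    have hcard4 : T.card ≤ (Finset.Icc a b).card :=
      Finset.card_le_card_of_injOn f hmapsto hinjOn
    have hcoord : ∀ i : Fin 2, (b i + 1 - a i) ≤ 2 := by
      intro i
      have h1 : (a i : ℝ) ≥ y i - 1/2 := by
        fin_cases i <;> simp only [ha, vec_0, vec_1] <;> exact Int.le_ceil _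
      have h2 : (b i : ℝ) ≤ y i + 1/2 := by
        fin_cases i <;> simp only [hb, vec_0, vec_1] <;> exact Int.floor_le _
      have : (b i : ℝ) - a i ≤ 1 := by linarith
      have : (b i : ℤ) - a i ≤ 1 := by exact_mod_cast this
      omega
    have hIccCard : (Finset.Icc a b).card = ((b 0 + 1 - a 0).toNat) * ((b 1 + 1 - a 1).toNat) := by
      rw [Pi.card_Icc]
      rw [Fin.prod_univ_two]
      rw [Int.card_Icc, Int.card_Icc]
    by_contra hgt
    push_neg at hgt
    have hc0 := hcoord 0
    have hc1 := hcoord 1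
    set n0 := (b 0 + 1 - a 0).toNat with hn0def
    set n1 := (b 1 + 1 - a 1).toNat with hn1def
    have hn0 : n0 ≤ 2 := by omega
    have hn1 : n1 ≤ 2 := by omega
    have hle4 : (Finset.Icc a b).card ≤ 4 := by
      rw [hIccCard]
      calc n0 * n1 ≤ 2 * 2 := Nat.mul_le_mul hn0 hn1
        _ = 4 := by norm_num
    have hT4 : T.card = 4 := by omega
    have hI4 : (Finset.Icc a b).card = 4 := by omega
    have hprod : n0 * n1 = 4 := by rw [← hIccCard]; exact hI4
    have hn0' : n0 = 2 := by interval_cases n0 <;> omega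
    have hn1' : n1 = 2 := by
      have h2 : 2 * n1 = 4 := by rw [← hn0']; exact hprod
      omega
    have hb0 : b 0 = a 0 + 1 := by omega
    have hb1 : b 1 = a 1 + 1 := by omega
    -- image = Icc a b
    have himg : T.image f = Finset.Icc a b := by
      apply Finset.eq_of_subset_of_card_le
      · intro v hv
        rw [Finset.mem_image] at hv
        obtain ⟨S, hS, rfl⟩ := hv
        exact hmapsto S hS
      · rw [Finset.card_image_of_injOn hinjOn]
        omega
    have hcorner : ∀ v : Fin 2 → ℤ, v ∈ Finset.Icc a b → ∃ S ∈ T, f S = v := by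
      intro v hv
      rw [← himg, Finset.mem_image] at hv
      exact hv
    have hmemc : ∀ m n : ℤ, a 0 ≤ m → m ≤ a 0 + 1 → a 1 ≤ n → n ≤ a 1 + 1 →
        vec m n ∈ Finset.Icc a b := by
      intro m n h1 h2 h3 h4
      rw [Finset.mem_Icc]
      constructor <;> rw [Pi.le_def, Fin.forall_fin_two] <;> constructor <;>
        simp only [vec_0, vec_1] <;> omega
    obtain ⟨S1, hS1, hf1⟩ := hcorner (vec (a 0) (a 1))
      (hmemc _ _ le_rfl (by omega) le_rfl (by omega))
    obtain ⟨S2, hS2, hf2⟩ := hcorner (vec (a 0 + 1) (a 1))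
      (hmemc _ _ (by omega) le_rfl le_rfl (by omega))
    obtain ⟨S3, hS3, hf3⟩ := hcorner (vec (a 0) (a 1 + 1))
      (hmemc _ _ le_rfl (by omega) (by omega) le_rfl)
    obtain ⟨S4, hS4, hf4⟩ := hcorner (vec (a 0 + 1) (a 1 + 1))
      (hmemc _ _ (by omega) le_rfl (by omega) le_rfl)
    -- key: a corner whose right neighbour is in a different piece is a boundary point
    have hkey : ∀ (m n : ℤ) (S S' : Set (Fin 2 → ℤ)), S ∈ T → S' ∈ T → S ≠ S' →
        f S = vec m n → f S' = vec (m+1) n → act (vec m n) x ∈ B := by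
      intro m n S S' hS hS' hne hfSv hfSv'
      set w := act (vec m n) x with hw
      have hvS : vec m n ∈ S := hfSv ▸ (hfT S hS).1
      have hvS' : vec (m+1) n ∈ S' := hfSv' ▸ (hfT S' hS').1
      obtain ⟨w', hw'⟩ := (hT S hS).1
      have hwP : w ∈ piece w' := by rw [← hw']; exact ⟨vec m n, hvS, rfl⟩
      have hppp : (fun g => act g x) '' S = piece w := by
        rw [hw', hpeq w' w hwP]
      have hnotS : vec (m+1) n ∉ S := hdisj S' hS' S hS (Ne.symm hne) _ hvS'
      have hR0 : ¬ (1 ≤ (R w : ℤ)) := by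
        intro hRw
        apply hnotS
        rw [hSpre S hS]
        have : act (vec (m+1) n) x = act (vec 1 0) w := by
          rw [hw, hcomp, add_comm (1:ℤ) m, zero_add]
        simp only [Set.mem_setOf_eq]
        rw [this, hppp]
        exact (hmem w (vec 1 0)).mpr ⟨by simp, by simpa using hRw, rfl⟩
      have hRw0 : R w = 0 := by omega
      have := hRB w
      rw [hRw0] at this
      norm_num at this
      rwa [hzero] at this
    have hB00 : act (vec (a 0) (a 1)) x ∈ B := by
      refine hkey (a 0) (a 1) S1 S2 hS1 hS2 ?_ hf1 hf2
      intro h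
      rw [h, hf2] at hf1
      have := congrFun hf1 0
      simp at this
    have hB01 : act (vec (a 0) ((a 1) + 1)) x ∈ B := by
      refine hkey (a 0) ((a 1) + 1) S3 S4 hS3 hS4 ?_ hf3 hf4
      intro h
      rw [h, hf4] at hf3
      have := congrFun hf3 0
      simp at this
    apply hBvert _ hB00
    have : act (vec 0 1) (act (vec (a 0) (a 1)) x) = act (vec (a 0) (a 1 + 1)) x := by
      rw [hcomp]
      have e1 : (0 : ℤ) + a 0 = a 0 := by ring
      have e2 : (1 : ℤ) + a 1 = a 1 + 1 := by ring
      rw [e1, e2]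
    rw [this]
    exact hB01

end Stmt19Aux

/-- for every free Borel action of `ℤ²` on a Polish space `X` there is a Borel
minimal (i.e. `3`-regulated) regulated partition of `X`. -/
theorem stmt19 (X : Type) [TopologicalSpace X] [PolishSpace X]
    [MeasurableSpace X] [BorelSpace X]
    (act : (Fin 2 → ℤ) → X → X)
    (hzero : ∀ x, act 0 x = x)
    (hadd : ∀ g h x, act (g + h) x = act g (act h x))
    (hBorel : ∀ g, Measurable (act g))
    (hfree : ∀ (x : X) (g : Fin 2 → ℤ), g ≠ 0 → act g x ≠ x) :
    ∃ P : Set (Set X),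
      (∀ Q ∈ P, ∃ (x : X) (S : Set (Fin 2 → ℤ)),
          IsZRect S ∧ Q = (fun g => act g x) '' S) ∧
      (⋃₀ P = Set.univ) ∧
      (∀ Q₁ ∈ P, ∀ Q₂ ∈ P, Q₁ ≠ Q₂ → Q₁ ∩ Q₂ = ∅) ∧
      (∀ g : Fin 2 → ℤ, MeasurableSet {x : X | ∃ Q ∈ P, x ∈ Q ∧ act g x ∈ Q}) ∧
      (∀ (x : X) (y : Fin 2 → ℝ) (T : Finset (Set (Fin 2 → ℤ))),
        (∀ S ∈ T, ((fun g => act g x) '' S) ∈ P ∧ y ∈ CubeSet S) → T.card ≤ 3) :=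
  Stmt19Aux.main X act hzero hadd hBorel hfree
end
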